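/- arXiv:2007.12097 — 7 statements merged into one kernel-verified Lean document; each statement's English description precedes it below -/
import Mathlib

section
/- For any two distinct subsets A, B of {1,...,n}, there exists a prime p with p ≤ C·√(n·log n) (for an absolute constant C) and a residue i with 0 ≤ i < p such that the number of elements of A congruent to i mod p differs from the number of elements of B congruent to i mod p. -/
open Polynomial Finset

-- fiberwise decomposition of a power sum mod p
lemma aux_sum_pow_mod (S : Finset ℕ) (p : ℕ) (hp : 0 < p) :
    ((X:ℚ[X])^p - 1) ∣ (∑ a ∈ S, (X:ℚ[X])^a) -
      ∑ i ∈ Finset.range p, ((S.filter (fun a => a % p = i)).card : ℚ[X]) * X^i := by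
  have h1 : ∑ i ∈ Finset.range p, ((S.filter (fun a => a % p = i)).card : ℚ[X]) * X^i
      = ∑ a ∈ S, (X:ℚ[X])^(a % p) := by
    rw [← Finset.sum_fiberwise_of_maps_to (g := fun a => a % p) (t := Finset.range p)
      (fun a _ => Finset.mem_range.mpr (Nat.mod_lt a hp)) (fun a => (X:ℚ[X])^(a % p))]
    refine Finset.sum_congr rfl (fun i _ => ?_)
    rw [Finset.sum_congr rfl (fun a ha => ?_), Finset.sum_const, nsmul_eq_mul]
    rw [(Finset.mem_filter.mp ha).2]
  rw [h1, ← Finset.sum_sub_distrib]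
  refine Finset.dvd_sum (fun a _ => ?_)
  have hd := sub_dvd_pow_sub_pow ((X:ℚ[X])^p) 1 (a / p)
  rw [one_pow, ← pow_mul] at hd
  have he : (X:ℚ[X])^a - X^(a % p) = ((X:ℚ[X])^(p * (a/p)) - 1) * X^(a % p) := by
    rw [sub_mul, one_mul, ← pow_add, Nat.div_add_mod]
  rw [he]
  exact hd.mul_right _

lemma aux_dvd_D {A B : Finset ℕ} {p : ℕ} (hp : 0 < p)
    (h : ∀ i < p, (A.filter (fun a => a % p = i)).card = (B.filter (fun a => a % p = i)).card) :
    ((X:ℚ[X])^p - 1) ∣ (∑ a ∈ A, (X:ℚ[X])^a) - (∑ a ∈ B, (X:ℚ[X])^a) := by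
  have hA := aux_sum_pow_mod A p hp
  have hB := aux_sum_pow_mod B p hp
  have hmid : ∑ i ∈ Finset.range p, ((A.filter (fun a => a % p = i)).card : ℚ[X]) * X^i
      = ∑ i ∈ Finset.range p, ((B.filter (fun a => a % p = i)).card : ℚ[X]) * X^i :=
    Finset.sum_congr rfl (fun i hi => by rw [h i (Finset.mem_range.mp hi)])
  have := dvd_sub hA hB
  rw [hmid] at this
  convert this using 1
  ring

lemma aux_coeff_sum (S : Finset ℕ) (k : ℕ) :
    (∑ a ∈ S, (X:ℚ[X])^a).coeff k = if k ∈ S then 1 else 0 := by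
  rw [Polynomial.finset_sum_coeff]
  simp only [Polynomial.coeff_X_pow]
  exact Finset.sum_ite_eq S k (fun _ => 1)

lemma aux_natDegree_sum (S : Finset ℕ) (n : ℕ) (hS : S ⊆ Finset.Icc 1 n) :
    (∑ a ∈ S, (X:ℚ[X])^a).natDegree ≤ n := by
  refine Polynomial.natDegree_sum_le_of_forall_le S _ (fun a ha => ?_)
  rw [Polynomial.natDegree_X_pow]
  exact (Finset.mem_Icc.mp (hS ha)).2

lemma aux_sum_totient_le {n : ℕ} {A B : Finset ℕ} (hA : A ⊆ Finset.Icc 1 n)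
    (hB : B ⊆ Finset.Icc 1 n) (hAB : A ≠ B) (P : Finset ℕ) (hP : ∀ p ∈ P, Nat.Prime p)
    (hdvd : ∀ p ∈ P, ((X:ℚ[X])^p - 1) ∣ (∑ a ∈ A, (X:ℚ[X])^a) - (∑ a ∈ B, (X:ℚ[X])^a)) :
    ∑ p ∈ P, (p - 1) ≤ n := by
  set D : ℚ[X] := (∑ a ∈ A, (X:ℚ[X])^a) - (∑ a ∈ B, (X:ℚ[X])^a) with hD
  have hD0 : D ≠ 0 := by
    obtain ⟨a, ha⟩ := Finset.symmDiff_nonempty.mpr hAB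
    rw [Finset.mem_symmDiff] at ha
    intro h0
    have hc : D.coeff a = 0 := by rw [h0]; simp
    rw [hD, Polynomial.coeff_sub, aux_coeff_sum, aux_coeff_sum] at hc
    rcases ha with ⟨h1, h2⟩ | ⟨h1, h2⟩ <;> simp [h1, h2] at hc
  have hdegD : D.natDegree ≤ n :=
    le_trans (Polynomial.natDegree_sub_le _ _)
      (max_le (aux_natDegree_sum A n hA) (aux_natDegree_sum B n hB))
  have hprod : (∏ p ∈ P, cyclotomic p ℚ) ∣ D := by
    refine Finset.prod_dvd_of_coprime ?_ (fun p hp => ?_)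
    · intro p hp q hq hne
      exact cyclotomic.isCoprime_rat hne
    · exact (cyclotomic.dvd_X_pow_sub_one p ℚ).trans (hdvd p hp)
  have hdeg := (Polynomial.natDegree_le_of_dvd hprod hD0).trans hdegD
  rw [Polynomial.natDegree_prod _ _ (fun p _ => cyclotomic_ne_zero p ℚ)] at hdeg
  calc ∑ p ∈ P, (p - 1) = ∑ p ∈ P, (cyclotomic p ℚ).natDegree := by
        refine Finset.sum_congr rfl (fun p hp => ?_)
        rw [Polynomial.natDegree_cyclotomic, Nat.totient_prime (hP p hp)]
    _ ≤ n := hdeg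

open Nat in

lemma aux_centralBinom_le (m : ℕ) (hm : 2 < m) :
    Nat.centralBinom m ≤ (2*m)^(Nat.sqrt (2*m)) * 4^(2*m/3) *
      (2*m)^(((Finset.Ioc m (2*m)).filter Nat.Prime).card) := by
  have m_pos : 0 < m := by omega
  have n2_pos : 1 ≤ 2 * m := by omega
  set f : ℕ → ℕ := fun x => x ^ (Nat.centralBinom m).factorization x with hf
  have hsplit : Nat.centralBinom m
      = (∏ x ∈ Finset.range (2*m/3+1), f x) * ∏ x ∈ Finset.Ico (2*m/3+1) (2*m+1), f x := by
    rw [← Nat.prod_pow_factorization_centralBinom m, Finset.range_eq_Ico,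
      ← Finset.prod_Ico_consecutive _ (Nat.zero_le (2*m/3+1)) (by omega : 2*m/3+1 ≤ 2*m+1)]
    simp only [hf, Finset.range_eq_Ico]
  rw [hsplit]
  refine Nat.mul_le_mul ?_ ?_
  · -- small primes part, as in mathlib's Bertrand proof
    set S := (Finset.range (2*m/3+1)).filter Nat.Prime with hS
    have hSprod : ∏ x ∈ S, f x = ∏ x ∈ Finset.range (2*m/3+1), f x := by
      refine Finset.prod_filter_of_ne fun p _ h => ?_
      contrapose! h
      simp only [hf] at h ⊢
      rw [Nat.factorization_eq_zero_of_not_prime _ h, pow_zero]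
    rw [← hSprod, ← Finset.prod_filter_mul_prod_filter_not S (· ≤ Nat.sqrt (2*m))]
    apply Nat.mul_le_mul
    · refine (Finset.prod_le_prod' fun p _ => (?_ : f p ≤ 2 * m)).trans ?_
      · exact Nat.pow_factorization_choose_le (by omega)
      have hcard : (Finset.Icc 1 (Nat.sqrt (2*m))).card = Nat.sqrt (2*m) := by
        rw [Nat.card_Icc, Nat.add_sub_cancel]
      rw [Finset.prod_const]
      refine pow_right_mono₀ n2_pos ((Finset.card_le_card fun x hx => ?_).trans hcard.le)
      obtain ⟨h1, h2⟩ := Finset.mem_filter.1 hx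
      exact Finset.mem_Icc.mpr ⟨(Finset.mem_filter.1 h1).2.one_lt.le, h2⟩
    · refine le_trans ?_ (primorial_le_4_pow (2*m/3))
      refine (Finset.prod_le_prod' fun p hp => (?_ : f p ≤ p)).trans ?_
      · obtain ⟨h1, h2⟩ := Finset.mem_filter.1 hp
        refine (pow_right_mono₀ (Finset.mem_filter.1 h1).2.one_lt.le ?_).trans (pow_one p).le
        exact Nat.factorization_choose_le_one (Nat.sqrt_lt'.mp <| not_le.1 h2)
      refine Finset.prod_le_prod_of_subset_of_one_le' (Finset.filter_subset _ _) ?_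
      exact fun p hp _ => (Finset.mem_filter.1 hp).2.one_lt.le
  · -- large primes part
    rw [← Finset.prod_filter_mul_prod_filter_not (Finset.Ico (2*m/3+1) (2*m+1))
      (fun x => Nat.Prime x ∧ m < x)]
    have h2 : ∏ x ∈ (Finset.Ico (2*m/3+1) (2*m+1)).filter (fun x => ¬(Nat.Prime x ∧ m < x)),
        f x = 1 := by
      refine Finset.prod_eq_one (fun x hx => ?_)
      obtain ⟨hx1, hx2⟩ := Finset.mem_filter.1 hx
      rw [Finset.mem_Ico] at hx1
      simp only [hf]
      by_cases hp : Nat.Prime x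
      · have hxm : x ≤ m := by
          rcases not_and_or.mp hx2 with h | h
          · exact absurd hp h
          · omega
        have h3 : 2 * m < 3 * x := by
          have h4 := hx1.1
          omega
        rw [Nat.factorization_centralBinom_of_two_mul_self_lt_three_mul hm hxm h3, pow_zero]
      · rw [Nat.factorization_eq_zero_of_not_prime _ hp, pow_zero]
    rw [h2, mul_one]
    have hsetEq : (Finset.Ico (2*m/3+1) (2*m+1)).filter (fun x => Nat.Prime x ∧ m < x)
        = (Finset.Ioc m (2*m)).filter Nat.Prime := by
      ext x
      simp only [Finset.mem_filter, Finset.mem_Ico, Finset.mem_Ioc]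
      constructor
      · rintro ⟨⟨h1, h2⟩, h3, h4⟩; exact ⟨⟨h4, by omega⟩, h3⟩
      · rintro ⟨⟨h1, h2⟩, h3⟩
        have h5 : 2*m/3 ≤ m := by omega
        exact ⟨⟨by omega, by omega⟩, h3, h1⟩
    rw [← hsetEq]
    refine le_trans (Finset.prod_le_prod' (fun p hp => (?_ : f p ≤ 2*m))) ?_
    · exact Nat.pow_factorization_choose_le (by omega)
    · rw [Finset.prod_const]


lemma aux_log_le (t : ℝ) (ht : 1 ≤ t) : Real.log t ≤ 4 * t ^ ((1:ℝ)/4) := by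
  have h0 : (0:ℝ) < t := by linarith
  have h1 : Real.log t = 4 * Real.log (t ^ ((1:ℝ)/4)) := by
    rw [Real.log_rpow h0]; ring
  have h2 : Real.log (t ^ ((1:ℝ)/4)) ≤ t ^ ((1:ℝ)/4) - 1 :=
    Real.log_le_sub_one_of_pos (Real.rpow_pos_of_pos h0 _)
  rw [h1]; linarith

lemma aux_K_lower (m K : ℕ) (hm : 10^8 ≤ m)
    (h : 4^m < m * ((2*m)^(Nat.sqrt (2*m)) * 4^(2*m/3) * (2*m)^K)) :
    (m:ℝ) ≤ 4 * (K:ℝ) * Real.log (2*(m:ℝ)) := by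
  set M : ℝ := (m:ℝ) with hMdef
  have hM : (10:ℝ)^8 ≤ M := by exact_mod_cast Nat.cast_le.mpr hm
  have hM0 : (0:ℝ) < M := by norm_num at hM ⊢; linarith
  have hM1 : (1:ℝ) ≤ M := by norm_num at hM ⊢; linarith
  have h2M1 : (1:ℝ) ≤ 2*M := by linarith
  have h2M0 : (0:ℝ) < 2*M := by linarith
  have hlog2M : 0 ≤ Real.log (2*M) := Real.log_nonneg h2M1
  set s0 : ℕ := Nat.sqrt (2*m) with hs0
  set t0 : ℕ := 2*m/3 with ht0
  -- cast the inequality to ℝ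
  have hc : (4:ℝ)^m ≤ M * ((2*M)^s0 * 4^t0 * (2*M)^K) := by
    have := (Nat.cast_lt (α := ℝ)).mpr h
    push_cast at this
    exact this.le
  -- take logs
  have hRHSpos : (0:ℝ) < M * ((2*M)^s0 * 4^t0 * (2*M)^K) := by positivity
  have hlog : Real.log ((4:ℝ)^m) ≤ Real.log (M * ((2*M)^s0 * 4^t0 * (2*M)^K)) := by
    rw [Real.log_le_log_iff (by positivity) hRHSpos]; exact hc
  rw [Real.log_pow, Real.log_mul (ne_of_gt hM0) (ne_of_gt (by positivity)),
      Real.log_mul (by positivity) (by positivity),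
      Real.log_mul (by positivity) (by positivity),
      Real.log_pow, Real.log_pow, Real.log_pow] at hlog
  -- bound the nat-cast quantities
  have hs : (s0:ℝ) ≤ Real.sqrt (2*M) := by
    rw [hs0]
    have := Real.nat_sqrt_le_real_sqrt (a := 2*m)
    convert this using 2
    push_cast; ring
  have ht : (t0:ℝ) ≤ 2*M/3 := by
    rw [ht0]
    have := Nat.cast_div_le (α := ℝ) (m := 2*m) (n := 3)
    exact this.trans_eq (by simp [hMdef])
  -- rpow bounds
  have hr : (100:ℝ) ≤ M ^ ((1:ℝ)/4) := by
    have h1 : (100:ℝ) = ((10:ℝ)^8) ^ ((1:ℝ)/4) := by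
      rw [show (10:ℝ)^8 = (100:ℝ)^(4:ℕ) by norm_num, ← Real.rpow_natCast 100 4,
        ← Real.rpow_mul (by norm_num)]
      norm_num
    rw [h1]
    exact Real.rpow_le_rpow (by positivity) hM (by norm_num)
  have hM34 : M ^ ((3:ℝ)/4) ≤ M / 100 := by
    have hmul : M ^ ((3:ℝ)/4) * M ^ ((1:ℝ)/4) = M := by
      rw [← Real.rpow_add hM0]; norm_num
    nlinarith [Real.rpow_nonneg (le_of_lt hM0) ((3:ℝ)/4)]
  have hlogM : Real.log M ≤ 4 * M ^ ((3:ℝ)/4) := by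
    refine (aux_log_le M hM1).trans ?_
    have := Real.rpow_le_rpow_of_exponent_le hM1 (by norm_num : (1:ℝ)/4 ≤ 3/4)
    linarith
  have hsqrtlog : Real.sqrt (2*M) * Real.log (2*M) ≤ 8 * M ^ ((3:ℝ)/4) := by
    have h1 : Real.log (2*M) ≤ 4 * (2*M) ^ ((1:ℝ)/4) := aux_log_le _ h2M1
    have h2 : Real.sqrt (2*M) = (2*M) ^ ((1:ℝ)/2) := Real.sqrt_eq_rpow _
    have h3 : (2*M) ^ ((1:ℝ)/2) * (2*M) ^ ((1:ℝ)/4) = (2*M) ^ ((3:ℝ)/4) := by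
      rw [← Real.rpow_add h2M0]; norm_num
    have h4 : (2*M) ^ ((3:ℝ)/4) = 2 ^ ((3:ℝ)/4) * M ^ ((3:ℝ)/4) :=
      Real.mul_rpow (by norm_num) (le_of_lt hM0)
    have h5 : (2:ℝ) ^ ((3:ℝ)/4) ≤ 2 := by
      calc (2:ℝ) ^ ((3:ℝ)/4) ≤ 2 ^ (1:ℝ) :=
        Real.rpow_le_rpow_of_exponent_le (by norm_num) (by norm_num)
      _ = 2 := Real.rpow_one 2
    have h6 : (0:ℝ) ≤ M ^ ((3:ℝ)/4) := Real.rpow_nonneg (le_of_lt hM0) _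
    have h7 : (0:ℝ) ≤ (2*M) ^ ((1:ℝ)/2) := Real.rpow_nonneg (le_of_lt h2M0) _
    calc Real.sqrt (2*M) * Real.log (2*M) ≤ (2*M) ^ ((1:ℝ)/2) * (4 * (2*M) ^ ((1:ℝ)/4)) := by
          rw [h2]; exact mul_le_mul_of_nonneg_left h1 h7
      _ = 4 * (2*M) ^ ((3:ℝ)/4) := by rw [← h3]; ring
      _ = 4 * (2 ^ ((3:ℝ)/4) * M ^ ((3:ℝ)/4)) := by rw [h4]
      _ ≤ 8 * M ^ ((3:ℝ)/4) := by nlinarith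
  have hlog4 : (1.386:ℝ) ≤ Real.log 4 := by
    rw [show (4:ℝ) = 2^(2:ℕ) by norm_num, Real.log_pow]
    have := Real.log_two_gt_d9
    push_cast
    linarith
  have hlog4' : Real.log 4 ≤ 2 := by
    rw [show (4:ℝ) = 2^(2:ℕ) by norm_num, Real.log_pow]
    have := Real.log_two_lt_d9
    push_cast
    linarith
  -- combine
  have hb1 : (s0:ℝ) * Real.log (2*M) ≤ 8 * M ^ ((3:ℝ)/4) :=
    le_trans (mul_le_mul_of_nonneg_right hs hlog2M) hsqrtlog
  have hb2 : (t0:ℝ) * Real.log 4 ≤ (2*M/3) * Real.log 4 :=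
    mul_le_mul_of_nonneg_right ht (by linarith)
  have hb3 : (M/3) * 1.386 ≤ (M/3) * Real.log 4 :=
    mul_le_mul_of_nonneg_left hlog4 (by linarith)
  have hM100 : M ^ ((3:ℝ)/4) ≤ M / 100 := hM34
  -- from hlog : m * log 4 ≤ log M + (s0 log(2M) + (t0 log 4 + K log(2M)))
  have hfinal : M / 4 ≤ (K:ℝ) * Real.log (2*M) := by
    have hKlog : (M/3) * Real.log 4 - 12 * (M/100) ≤ (K:ℝ) * Real.log (2*M) := by
      linarith [hlog, hlogM, hb1, hb2, hM100]
    linarith [hb3]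
  linarith [hfinal]

set_option maxHeartbeats 2000000 in
theorem stmt0 : ∃ C : ℝ, 0 < C ∧ ∀ n : ℕ, 2 ≤ n → ∀ A B : Finset ℕ,
    A ⊆ Finset.Icc 1 n → B ⊆ Finset.Icc 1 n → A ≠ B →
    ∃ p : ℕ, Nat.Prime p ∧ (p : ℝ) ≤ C * Real.sqrt (n * Real.log n) ∧
      ∃ i < p, (A.filter (fun a => a % p = i)).card ≠ (B.filter (fun a => a % p = i)).card := by
  refine ⟨10^7, by norm_num, ?_⟩
  intro n hn A B hA hB hAB
  have hn1 : (1:ℝ) < (n:ℝ) := by exact_mod_cast hn.trans_lt' one_lt_two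
  have hlogn : 0 < Real.log n := Real.log_pos hn1
  have hn0 : (0:ℝ) < (n:ℝ) := by linarith
  have hn2 : (2:ℝ) ≤ (n:ℝ) := by exact_mod_cast hn
  have hnln : (0:ℝ) < (n:ℝ) * Real.log n := by positivity
  by_cases hsmall : n ≤ 10^14
  · -- small n : use a Bertrand prime in (n, 2n]
    obtain ⟨p, hp, hnp, hp2n⟩ := Nat.exists_prime_lt_and_le_two_mul n (by omega)
    refine ⟨p, hp, ?_, ?_⟩
    · have h1 : (p:ℝ) ≤ 2*(n:ℝ) := by exact_mod_cast hp2n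
      have h2 : 2*(n:ℝ) ≤ 10^7 * Real.sqrt (n * Real.log n) := by
        have hkey : 4*(n:ℝ) ≤ 10^14 * Real.log n := by
          by_cases hsm : n ≤ 10^13
          · have : (n:ℝ) ≤ 10^13 := by exact_mod_cast hsm
            have hl2 : (0.6931471803:ℝ) < Real.log 2 := Real.log_two_gt_d9
            have : Real.log 2 ≤ Real.log n := by
              apply Real.log_le_log (by norm_num)
              exact_mod_cast hn
            nlinarith
          · push_neg at hsm
            have h13 : (10:ℝ)^13 ≤ (n:ℝ) := by exact_mod_cast hsm.le
            have hnR : (n:ℝ) ≤ 10^14 := by exact_mod_cast hsmall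
            have h243 : ((2:ℝ))^(43:ℕ) ≤ (n:ℝ) := by norm_num; linarith
            have hlog : Real.log ((2:ℝ)^(43:ℕ)) ≤ Real.log n :=
              Real.log_le_log (by positivity) h243
            rw [Real.log_pow] at hlog
            have hl2 : (0.6931471803:ℝ) < Real.log 2 := Real.log_two_gt_d9
            push_cast at hlog
            nlinarith
        have h3 : (2*(n:ℝ)/10^7)^2 ≤ (n:ℝ) * Real.log n := by
          rw [div_pow]
          rw [div_le_iff₀ (by norm_num)]
          ring_nf
          nlinarith
        have := (Real.le_sqrt (by positivity) (le_of_lt hnln)).mpr h3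
        rw [div_le_iff₀ (by norm_num)] at this
        linarith
      linarith
    · obtain ⟨a, ha⟩ := Finset.symmDiff_nonempty.mpr hAB
      rw [Finset.mem_symmDiff] at ha
      have haIcc : a ∈ Finset.Icc 1 n := by
        rcases ha with ⟨h1,_⟩|⟨h1,_⟩
        exacts [hA h1, hB h1]
      have han : a ≤ n := (Finset.mem_Icc.mp haIcc).2
      refine ⟨a, by omega, ?_⟩
      have hfilt : ∀ S : Finset ℕ, S ⊆ Finset.Icc 1 n →
          S.filter (fun x => x % p = a) = S.filter (fun x => x = a) := by
        intro S hS
        apply Finset.filter_congr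
        intro x hx
        have hxn : x ≤ n := (Finset.mem_Icc.mp (hS hx)).2
        rw [Nat.mod_eq_of_lt (by omega)]
      rw [hfilt A hA, hfilt B hB, Finset.filter_eq', Finset.filter_eq']
      rcases ha with ⟨h1,h2⟩|⟨h1,h2⟩ <;> simp [h1, h2]
  · -- large n
    push_neg at hsmall
    by_contra hcon
    push_neg at hcon
    have hkey : ∃ m : ℕ, 10^8 ≤ m ∧ 2*m ≤ n ∧
        9*((n:ℝ)*Real.log n) ≤ (m:ℝ)*(m:ℝ) ∧ 2*(m:ℝ) ≤ 12*Real.sqrt ((n:ℝ) * Real.log n) := by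
      set x : ℝ := Real.sqrt (n * Real.log n) with hxdef
      refine ⟨3 * Nat.ceil x, ?_⟩
      have hx0 : 0 < x := Real.sqrt_pos.mpr hnln
      have hx1 : 1 ≤ x := by
        rw [hxdef, show (1:ℝ) = Real.sqrt 1 by simp]
        apply Real.sqrt_le_sqrt
        have hl2 : (0.6931471803:ℝ) < Real.log 2 := Real.log_two_gt_d9
        have : Real.log 2 ≤ Real.log n := Real.log_le_log (by norm_num) (by exact_mod_cast hn)
        nlinarith [hn2]
      have hm_lb : 3*x ≤ ((3 * Nat.ceil x : ℕ):ℝ) := by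
        push_cast
        have := Nat.le_ceil x
        linarith
      have hm_ub : ((3 * Nat.ceil x : ℕ):ℝ) ≤ 6*x := by
        push_cast
        have := Nat.ceil_lt_add_one (le_of_lt hx0)
        linarith
      have hnR : (10:ℝ)^14 ≤ (n:ℝ) := by exact_mod_cast hsmall.le
      have h246 : ((2:ℝ))^(46:ℕ) ≤ (n:ℝ) := by norm_num; linarith
      have hlogn31 : (31:ℝ) ≤ Real.log n := by
        have hlog : Real.log ((2:ℝ)^(46:ℕ)) ≤ Real.log n := Real.log_le_log (by positivity) h246
        rw [Real.log_pow] at hlog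
        have hl2 : (0.6931471803:ℝ) < Real.log 2 := Real.log_two_gt_d9
        push_cast at hlog
        nlinarith
      have hxbig : (10:ℝ)^8/3 ≤ x := by
        rw [hxdef, Real.le_sqrt (by norm_num) (le_of_lt hnln)]
        nlinarith
      refine ⟨?_, ?_, ?_, by linarith⟩
      · have : (10:ℝ)^8 ≤ ((3 * Nat.ceil x : ℕ):ℝ) := by linarith
        exact_mod_cast this
      · -- 2*m ≤ n
        have hn14 : (100:ℝ) ≤ (n:ℝ) ^ ((1:ℝ)/4) := by
          have h1 : (100:ℝ) = ((10:ℝ)^8) ^ ((1:ℝ)/4) := by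
            rw [show (10:ℝ)^8 = (100:ℝ)^(4:ℕ) by norm_num, ← Real.rpow_natCast 100 4,
              ← Real.rpow_mul (by norm_num)]
            norm_num
          rw [h1]
          exact Real.rpow_le_rpow (by positivity) (by linarith) (by norm_num)
        have hn34 : (n:ℝ) ^ ((3:ℝ)/4) ≤ (n:ℝ)/100 := by
          have hmul : (n:ℝ) ^ ((3:ℝ)/4) * (n:ℝ) ^ ((1:ℝ)/4) = (n:ℝ) := by
            rw [← Real.rpow_add hn0]; norm_num
          nlinarith [Real.rpow_nonneg (le_of_lt hn0) ((3:ℝ)/4)]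
        have hxub : x ≤ (3:ℝ)/2 * (n:ℝ) ^ ((3:ℝ)/4) := by
          have hlog2sqrt : Real.log n ≤ 2 * Real.sqrt n := by
            have h1 : Real.log (Real.sqrt n) ≤ Real.sqrt n - 1 :=
              Real.log_le_sub_one_of_pos (Real.sqrt_pos.mpr hn0)
            rw [Real.log_sqrt (le_of_lt hn0)] at h1
            linarith
          have h2 : (n:ℝ) * Real.log n ≤ 2 * ((n:ℝ) * Real.sqrt n) := by nlinarith
          have h3 : (n:ℝ) * Real.sqrt n = (n:ℝ) ^ ((3:ℝ)/2) := by
            rw [Real.sqrt_eq_rpow]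
            rw [show (n:ℝ) * (n:ℝ)^((1:ℝ)/(2:ℝ)) = (n:ℝ)^((1:ℝ)) * (n:ℝ)^((1:ℝ)/(2:ℝ)) by
              rw [Real.rpow_one]]
            rw [← Real.rpow_add hn0]
            norm_num
          have h4 : x ≤ Real.sqrt (2 * (n:ℝ) ^ ((3:ℝ)/2)) := by
            rw [hxdef]
            apply Real.sqrt_le_sqrt
            rw [← h3]; linarith
          have h5 : Real.sqrt (2 * (n:ℝ) ^ ((3:ℝ)/2)) = Real.sqrt 2 * (n:ℝ) ^ ((3:ℝ)/4) := by
            rw [Real.sqrt_mul (by norm_num), Real.sqrt_eq_rpow ((n:ℝ) ^ ((3:ℝ)/2)),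
              ← Real.rpow_mul (le_of_lt hn0)]
            norm_num
          have h6 : Real.sqrt 2 ≤ 3/2 := by
            rw [show (3:ℝ)/2 = Real.sqrt ((3/2)^2) by rw [Real.sqrt_sq (by norm_num)]]
            apply Real.sqrt_le_sqrt; norm_num
          have h7 : (0:ℝ) ≤ (n:ℝ) ^ ((3:ℝ)/4) := Real.rpow_nonneg (le_of_lt hn0) _
          calc x ≤ Real.sqrt 2 * (n:ℝ) ^ ((3:ℝ)/4) := by rw [← h5]; exact h4
            _ ≤ 3/2 * (n:ℝ) ^ ((3:ℝ)/4) := mul_le_mul_of_nonneg_right h6 h7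
        have : (2*((3 * Nat.ceil x : ℕ):ℝ)) ≤ (n:ℝ) := by nlinarith
        exact_mod_cast this
      · nlinarith [Real.mul_self_sqrt (le_of_lt hnln)]
    obtain ⟨m, hm8, h2mn, hsq, h2m12x⟩ := hkey
    -- set of primes
    obtain ⟨P, hPdef⟩ : ∃ P : Finset ℕ, P = (Finset.Ioc m (2*m)).filter Nat.Prime := ⟨_, rfl⟩
    have hPprime : ∀ p ∈ P, Nat.Prime p := fun p hp => (Finset.mem_filter.mp (hPdef ▸ hp)).2
    have hdvd : ∀ p ∈ P, ((X:ℚ[X])^p - 1) ∣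
        (∑ a ∈ A, (X:ℚ[X])^a) - (∑ a ∈ B, (X:ℚ[X])^a) := by
      intro p hp
      obtain ⟨hmem, hprime⟩ := Finset.mem_filter.mp (hPdef ▸ hp)
      rw [Finset.mem_Ioc] at hmem
      refine aux_dvd_D hprime.pos (hcon p hprime ?_)
      have hp2m : (p:ℝ) ≤ 2*(m:ℝ) := by exact_mod_cast hmem.2
      have hxnn : 0 ≤ Real.sqrt ((n:ℝ) * Real.log n) := Real.sqrt_nonneg _
      linarith
    have hsum := aux_sum_totient_le hA hB hAB P hPprime hdvd
    have hKm : P.card * m ≤ n := by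
      refine le_trans ?_ hsum
      rw [← smul_eq_mul]
      apply Finset.card_nsmul_le_sum
      intro p hp
      obtain ⟨hmem, _⟩ := Finset.mem_filter.mp (hPdef ▸ hp)
      rw [Finset.mem_Ioc] at hmem
      omega
    -- counting bound
    have hineq : 4^m < m * ((2*m)^(Nat.sqrt (2*m)) * 4^(2*m/3) * (2*m)^P.card) := by
      have hcb : Nat.centralBinom m ≤ (2*m)^(Nat.sqrt (2*m)) * 4^(2*m/3) * (2*m)^P.card := by
        rw [hPdef]
        exact aux_centralBinom_le m (by omega)
      calc 4^m < m * Nat.centralBinom m :=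
            Nat.four_pow_lt_mul_centralBinom m (by omega)
        _ ≤ m * ((2*m)^(Nat.sqrt (2*m)) * 4^(2*m/3) * (2*m)^P.card) :=
            Nat.mul_le_mul_left m hcb
    have hKlow := aux_K_lower m P.card hm8 hineq
    -- derive contradiction
    have hm0 : (0:ℝ) < (m:ℝ) := by
      have : (0:ℕ) < m := by omega
      exact_mod_cast this
    have hKmR : (P.card:ℝ) * (m:ℝ) ≤ (n:ℝ) := by exact_mod_cast hKm
    have hmR : (10:ℝ)^8 ≤ (m:ℝ) := by exact_mod_cast hm8
    have hmR100 : (1:ℝ) ≤ (m:ℝ) := le_trans (by norm_num) hmR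
    have hlog2m_pos : 0 ≤ Real.log (2*(m:ℝ)) := Real.log_nonneg (by linarith)
    have hlog2m_le : Real.log (2*(m:ℝ)) ≤ Real.log n := by
      apply Real.log_le_log (by linarith)
      have : ((2*m:ℕ):ℝ) ≤ (n:ℝ) := by exact_mod_cast h2mn
      push_cast at this
      linarith
    have hup : (m:ℝ) * (m:ℝ) ≤ 4 * ((n:ℝ) * Real.log n) := by
      have h1 : (m:ℝ) * (m:ℝ) ≤ (4 * (P.card:ℝ) * Real.log (2*(m:ℝ))) * (m:ℝ) :=
        mul_le_mul_of_nonneg_right hKlow (le_of_lt hm0)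
      have h2 : (4 * (P.card:ℝ) * Real.log (2*(m:ℝ))) * (m:ℝ)
          = 4 * ((P.card:ℝ) * (m:ℝ)) * Real.log (2*(m:ℝ)) := by ring
      have h3 : 4 * ((P.card:ℝ) * (m:ℝ)) * Real.log (2*(m:ℝ))
          ≤ 4 * (n:ℝ) * Real.log (2*(m:ℝ)) := by
        apply mul_le_mul_of_nonneg_right _ hlog2m_pos
        linarith
      have h4 : 4 * (n:ℝ) * Real.log (2*(m:ℝ)) ≤ 4 * (n:ℝ) * Real.log n := by
        apply mul_le_mul_of_nonneg_left hlog2m_le (by linarith)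
      rw [h2] at h1
      have h5 : 4 * ((n:ℝ) * Real.log n) = 4 * (n:ℝ) * Real.log n := by ring
      linarith [h1, h3, h4]
    linarith [hsq, hup, hnln]
end

section
/- Let A, B ⊆ {1,...,n} be distinct, and suppose that for every prime p ≤ k and every residue i ∈ {0,...,p-1}, the sets A and B have the same number of elements congruent to i mod p. Then the polynomial f(x) = Σ_{j=1}^n (1_A(j) − 1_B(j))·x^j is divisible by the product of the cyclotomic polynomials Φ_p(x) over all primes p ≤ k. -/
open Polynomial

private lemma prod_cyc_dvd (s : Finset ℕ) (hs : ∀ p ∈ s, Nat.Prime p) (f : ℤ[X])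
    (hf : ∀ p ∈ s, cyclotomic p ℤ ∣ f) :
    (∏ p ∈ s, cyclotomic p ℤ) ∣ f := by
  induction s using Finset.induction_on with
  | empty => simp
  | @insert q s hq ih =>
    obtain ⟨g, hg⟩ := ih (fun p hp => hs p (Finset.mem_insert_of_mem hp))
      (fun p hp => hf p (Finset.mem_insert_of_mem hp))
    have hqp : Nat.Prime q := hs q (Finset.mem_insert_self q s)
    have hirr : Irreducible (cyclotomic q ℤ) := cyclotomic.irreducible hqp.pos
    have hqprime : Prime (cyclotomic q ℤ) := hirr.prime
    have hdvd : cyclotomic q ℤ ∣ (∏ p ∈ s, cyclotomic p ℤ) * g := by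
      rw [← hg]; exact hf q (Finset.mem_insert_self q s)
    rcases hqprime.dvd_mul.mp hdvd with hd | hd
    · exfalso
      obtain ⟨p, hp, hdp⟩ := hqprime.exists_mem_finset_dvd hd
      have hpp : Nat.Prime p := hs p (Finset.mem_insert_of_mem hp)
      have hassoc : Associated (cyclotomic q ℤ) (cyclotomic p ℤ) :=
        hirr.associated_of_dvd (cyclotomic.irreducible hpp.pos) hdp
      have heq : cyclotomic q ℤ = cyclotomic p ℤ :=
        eq_of_monic_of_associated (cyclotomic.monic q ℤ) (cyclotomic.monic p ℤ) hassoc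
      have hdeg := congrArg natDegree heq
      rw [natDegree_cyclotomic, natDegree_cyclotomic, Nat.totient_prime hqp,
        Nat.totient_prime hpp] at hdeg
      have : q = p := by
        have := hqp.two_le; have := hpp.two_le; omega
      exact hq (this ▸ hp)
    · obtain ⟨h2, hh2⟩ := hd
      refine ⟨h2, ?_⟩
      rw [Finset.prod_insert hq, hg, hh2]; ring

open Polynomial in
theorem stmt1 (n k : ℕ) (A B : Finset ℕ) (hA : A ⊆ Finset.Icc 1 n) (hB : B ⊆ Finset.Icc 1 n)
    (hAB : A ≠ B)
    (h : ∀ p : ℕ, Nat.Prime p → p ≤ k →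
      ∀ i < p, (A.filter (fun a => a % p = i)).card = (B.filter (fun a => a % p = i)).card) :
    (∏ p ∈ (Finset.range (k+1)).filter Nat.Prime, Polynomial.cyclotomic p ℤ) ∣
      ∑ j ∈ Finset.Icc 1 n,
        Polynomial.C ((if j ∈ A then (1:ℤ) else 0) - (if j ∈ B then (1:ℤ) else 0)) * Polynomial.X ^ j := by
  set c : ℕ → ℤ := fun j => (if j ∈ A then (1:ℤ) else 0) - (if j ∈ B then (1:ℤ) else 0) with hc
  set f : ℤ[X] := ∑ j ∈ Finset.Icc 1 n, C (c j) * X ^ j with hf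
  have key : ∀ p : ℕ, Nat.Prime p → p ≤ k → ((X : ℤ[X]) ^ p - 1) ∣ f := by
    intro p hp hpk
    have hrw : f = (∑ j ∈ Finset.Icc 1 n, C (c j) * (X ^ j - X ^ (j % p)))
        + ∑ j ∈ Finset.Icc 1 n, C (c j) * X ^ (j % p) := by
      rw [← Finset.sum_add_distrib]
      apply Finset.sum_congr rfl
      intro j _
      ring
    rw [hrw]
    have h2 : (∑ j ∈ Finset.Icc 1 n, C (c j) * X ^ (j % p)) = 0 := by
      rw [← Finset.sum_fiberwise_of_maps_to (g := fun j => j % p) (t := Finset.range p)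
        (fun j _ => Finset.mem_range.mpr (Nat.mod_lt j hp.pos))]
      apply Finset.sum_eq_zero
      intro i hi
      have hi' : i < p := Finset.mem_range.mp hi
      have : ∀ j ∈ (Finset.Icc 1 n).filter (fun j => j % p = i),
          C (c j) * X ^ (j % p) = C (c j) * X ^ i := by
        intro j hj
        rw [(Finset.mem_filter.mp hj).2]
      rw [Finset.sum_congr rfl this, ← Finset.sum_mul, ← map_sum C]
      have hzero : (∑ j ∈ (Finset.Icc 1 n).filter (fun j => j % p = i), c j) = 0 := by
        have hsplit : (∑ j ∈ (Finset.Icc 1 n).filter (fun j => j % p = i), c j)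
            = (∑ j ∈ (Finset.Icc 1 n).filter (fun j => j % p = i), (if j ∈ A then (1:ℤ) else 0))
              - (∑ j ∈ (Finset.Icc 1 n).filter (fun j => j % p = i), (if j ∈ B then (1:ℤ) else 0)) := by
          rw [← Finset.sum_sub_distrib]
        have hAcount : (∑ j ∈ (Finset.Icc 1 n).filter (fun j => j % p = i),
            (if j ∈ A then (1:ℤ) else 0)) = ((A.filter (fun a => a % p = i)).card : ℤ) := by
          rw [Finset.sum_boole]
          congr 1
          rw [Finset.filter_filter]
          apply Finset.card_bij (fun a _ => a)
          · intro a ha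
            simp only [Finset.mem_filter] at ha ⊢
            exact ⟨ha.2.2, ha.2.1⟩
          · intro a _ b _ hab; exact hab
          · intro a ha
            simp only [Finset.mem_filter] at ha
            exact ⟨a, Finset.mem_filter.mpr ⟨hA ha.1, ha.2, ha.1⟩, rfl⟩
        have hBcount : (∑ j ∈ (Finset.Icc 1 n).filter (fun j => j % p = i),
            (if j ∈ B then (1:ℤ) else 0)) = ((B.filter (fun a => a % p = i)).card : ℤ) := by
          rw [Finset.sum_boole]
          congr 1
          rw [Finset.filter_filter]
          apply Finset.card_bij (fun a _ => a)
          · intro a ha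
            simp only [Finset.mem_filter] at ha ⊢
            exact ⟨ha.2.2, ha.2.1⟩
          · intro a _ b _ hab; exact hab
          · intro a ha
            simp only [Finset.mem_filter] at ha
            exact ⟨a, Finset.mem_filter.mpr ⟨hB ha.1, ha.2, ha.1⟩, rfl⟩
        rw [hsplit, hAcount, hBcount, h p hp hpk i hi']
        ring
      rw [hzero]
      simp
    rw [h2, add_zero]
    apply Finset.dvd_sum
    intro j _
    apply Dvd.dvd.mul_left
    have hpow : (X : ℤ[X]) ^ j - X ^ (j % p) = X ^ (j % p) * ((X ^ p) ^ (j / p) - 1) := by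
      rw [mul_sub, mul_one, ← pow_mul, ← pow_add, Nat.mod_add_div]
    rw [hpow]
    apply Dvd.dvd.mul_left
    have := sub_dvd_pow_sub_pow ((X : ℤ[X]) ^ p) 1 (j / p)
    simpa using this
  apply prod_cyc_dvd
  · intro p hp
    exact (Finset.mem_filter.mp hp).2
  · intro p hp
    obtain ⟨hpr, hpp⟩ := And.intro (Finset.mem_filter.mp hp).1 (Finset.mem_filter.mp hp).2
    have hpk : p ≤ k := by
      have := Finset.mem_range.mp hpr; omega
    exact dvd_trans (cyclotomic.dvd_X_pow_sub_one p ℤ) (key p hpp hpk)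
end

section
/- If A, B ⊆ {1,...,n} are distinct and for every prime p ≤ k and every residue i ∈ {0,...,p-1} we have |A_{i,p}| = |B_{i,p}|, then n ≥ Σ_{p ≤ k, p prime} (p−1). -/
open Polynomial Finset

theorem stmt2 (n k : ℕ) (A B : Finset ℕ) (hA : A ⊆ Finset.Icc 1 n) (hB : B ⊆ Finset.Icc 1 n)
    (hAB : A ≠ B)
    (h : ∀ p : ℕ, Nat.Prime p → p ≤ k →
      ∀ i < p, (A.filter (fun a => a % p = i)).card = (B.filter (fun a => a % p = i)).card) :
    ∑ p ∈ (Finset.range (k+1)).filter Nat.Prime, (p - 1) ≤ n := by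
  classical
  set f : ℚ[X] := (∑ a ∈ A, X ^ a) - (∑ b ∈ B, X ^ b) with hf
  -- f ≠ 0
  have hcoeff : ∀ j, f.coeff j = (if j ∈ A then 1 else 0) - (if j ∈ B then 1 else 0) := by
    intro j
    simp [hf, Polynomial.finset_sum_coeff, Polynomial.coeff_X_pow,
      Finset.sum_ite_eq' _ j (fun _ => (1 : ℚ))]
  have hf0 : f ≠ 0 := by
    intro h0
    apply hAB
    ext j
    have := hcoeff j
    rw [h0, Polynomial.coeff_zero] at this
    by_cases hjA : j ∈ A <;> by_cases hjB : j ∈ B <;>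
      simp only [hjA, hjB, if_true, if_false] at this ⊢ <;> norm_num at this
  -- degree f ≤ n
  have hdeg : f.natDegree ≤ n := by
    have hd : ∀ (S : Finset ℕ), S ⊆ Finset.Icc 1 n →
        (∑ a ∈ S, (X : ℚ[X]) ^ a).degree ≤ (n : ℕ) := by
      intro S hS
      refine (Polynomial.degree_sum_le _ _).trans ?_
      refine Finset.sup_le fun a ha => ?_
      rw [Polynomial.degree_X_pow]
      exact_mod_cast (Finset.mem_Icc.mp (hS ha)).2
    exact Polynomial.natDegree_le_iff_degree_le.mpr
      ((Polynomial.degree_sub_le _ _).trans (max_le (hd A hA) (hd B hB)))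
  -- for each prime p ≤ k, X^p - 1 ∣ f
  have hdvd : ∀ p : ℕ, Nat.Prime p → p ≤ k → (X ^ p - 1 : ℚ[X]) ∣ f := by
    intro p hp hpk
    have hstep : ∀ a : ℕ, (X ^ p - 1 : ℚ[X]) ∣ X ^ a - X ^ (a % p) := by
      intro a
      have : (X ^ p - 1 : ℚ[X]) ∣ (X ^ p) ^ (a / p) - 1 ^ (a / p) :=
        sub_dvd_pow_sub_pow _ _ _
      have h2 : (X ^ p - 1 : ℚ[X]) ∣ X ^ (p * (a / p)) - 1 := by
        simpa [← pow_mul] using this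
      have := h2.mul_left (X ^ (a % p) : ℚ[X])
      have heq : (X ^ (a % p) : ℚ[X]) * (X ^ (p * (a / p)) - 1)
          = X ^ a - X ^ (a % p) := by
        rw [mul_sub, mul_one, ← pow_add, Nat.mod_add_div]
      rwa [heq] at this
    have hsum : ∀ (S : Finset ℕ),
        (∑ a ∈ S, (X : ℚ[X]) ^ (a % p))
          = ∑ i ∈ Finset.range p, ((S.filter (fun a => a % p = i)).card : ℚ[X]) * X ^ i := by
      intro S
      rw [← Finset.sum_fiberwise_of_maps_to (g := fun a => a % p) (t := Finset.range p)
        (fun a _ => Finset.mem_range.mpr (Nat.mod_lt a hp.pos))]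
      refine Finset.sum_congr rfl fun i _ => ?_
      rw [Finset.sum_congr rfl (fun a ha => by
        rw [(Finset.mem_filter.mp ha).2]), Finset.sum_const, nsmul_eq_mul]
    have hzero : (∑ a ∈ A, (X : ℚ[X]) ^ (a % p)) = ∑ b ∈ B, (X : ℚ[X]) ^ (b % p) := by
      rw [hsum A, hsum B]
      refine Finset.sum_congr rfl fun i hi => ?_
      rw [h p hp hpk i (Finset.mem_range.mp hi)]
    have hA' : (X ^ p - 1 : ℚ[X]) ∣ ∑ a ∈ A, ((X : ℚ[X]) ^ a - X ^ (a % p)) :=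
      Finset.dvd_sum fun a _ => hstep a
    have hB' : (X ^ p - 1 : ℚ[X]) ∣ ∑ b ∈ B, ((X : ℚ[X]) ^ b - X ^ (b % p)) :=
      Finset.dvd_sum fun b _ => hstep b
    have : f = (∑ a ∈ A, ((X : ℚ[X]) ^ a - X ^ (a % p)))
        - (∑ b ∈ B, ((X : ℚ[X]) ^ b - X ^ (b % p))) := by
      rw [hf, Finset.sum_sub_distrib, Finset.sum_sub_distrib, hzero]
      ring
    rw [this]
    exact dvd_sub hA' hB'
  -- product of cyclotomics divides f
  set P := (Finset.range (k+1)).filter Nat.Prime with hP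
  have hprod : (∏ p ∈ P, Polynomial.cyclotomic p ℚ) ∣ f := by
    refine Finset.prod_dvd_of_coprime ?_ ?_
    · intro p hp q hq hpq
      exact Polynomial.cyclotomic.isCoprime_rat hpq
    · intro p hp
      obtain ⟨hpr, hpp⟩ := Finset.mem_filter.mp hp
      exact (Polynomial.cyclotomic.dvd_X_pow_sub_one p ℚ).trans
        (hdvd p hpp (Nat.lt_succ_iff.mp (Finset.mem_range.mp hpr)))
  have hdeg2 : (∏ p ∈ P, Polynomial.cyclotomic p ℚ).natDegree ≤ f.natDegree :=
    Polynomial.natDegree_le_of_dvd hprod hf0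
  have hdeg3 : (∏ p ∈ P, Polynomial.cyclotomic p ℚ).natDegree = ∑ p ∈ P, (p - 1) := by
    rw [Polynomial.natDegree_prod _ _ (fun p hp => Polynomial.cyclotomic_ne_zero p ℚ)]
    refine Finset.sum_congr rfl fun p hp => ?_
    rw [Polynomial.natDegree_cyclotomic,
      Nat.totient_prime (Finset.mem_filter.mp hp).2]
  calc ∑ p ∈ P, (p - 1) = (∏ p ∈ P, Polynomial.cyclotomic p ℚ).natDegree := hdeg3.symm
    _ ≤ f.natDegree := hdeg2
    _ ≤ n := hdeg
end

section
/- Suppose f(x) = Σ_{j=0}^n a_j x^j is a polynomial with complex coefficients satisfying |a_j| ≤ 1 for all j, and suppose (x−1)^k divides f(x). Then for all real x with 1 − k/(9n) ≤ x ≤ 1, we have |f(x)| ≤ (n+1)·(e/9)^k. -/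
open Polynomial Finset

lemma aux_pow_self (k : ℕ) : (k:ℝ)^k ≤ Real.exp 1 ^ k * k.factorial := by
  induction k with
  | zero => simp
  | succ k ih =>
    rcases Nat.eq_zero_or_pos k with hk | hk
    · subst hk; simp [Real.exp_pos 1 |>.le]
    have hkpos : (0:ℝ) < k := by positivity
    have h1 : ((k:ℝ)+1)^k ≤ Real.exp 1 * (k:ℝ)^k := by
      have heq : ((k:ℝ)+1)^k = (k:ℝ)^k * (1 + 1/k)^k := by
        rw [← mul_pow]; congr 1; field_simp
      rw [heq]
      have h2 : (1 + 1/(k:ℝ))^k ≤ Real.exp (1/k) ^ k := by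
        apply pow_le_pow_left₀ (by positivity)
        linarith [Real.add_one_le_exp (1/(k:ℝ))]
      have h3 : Real.exp (1/(k:ℝ)) ^ k = Real.exp 1 := by
        rw [← Real.exp_nat_mul]; field_simp
      nlinarith [pow_nonneg hkpos.le k]
    push_cast
    calc ((k:ℝ)+1)^(k+1) = ((k:ℝ)+1)^k * ((k:ℝ)+1) := by ring
    _ ≤ (Real.exp 1 * (k:ℝ)^k) * ((k:ℝ)+1) := by gcongr
    _ ≤ (Real.exp 1 * (Real.exp 1 ^ k * k.factorial)) * ((k:ℝ)+1) := by gcongr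
    _ = Real.exp 1 ^ (k+1) * (k.factorial * ((k:ℝ)+1)) := by ring
    _ = Real.exp 1 ^ (k+1) * ((k+1).factorial) := by
        rw [Nat.factorial_succ]; push_cast; ring

lemma aux_coeff_sum_s3 (g : Polynomial ℂ) (j : ℕ) :
    ‖g.coeff j‖ ≤ ∑ i ∈ range (j+1), ‖((X - 1) * g).coeff i‖ := by
  induction j with
  | zero =>
    have h0 : ((X - 1) * g).coeff 0 = -g.coeff 0 := by
      rw [sub_mul, one_mul, coeff_sub, mul_coeff_zero, coeff_X_zero, zero_mul, zero_sub]
    simp [h0]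
  | succ j ih =>
    have hc : ((X - 1) * g).coeff (j+1) = g.coeff j - g.coeff (j+1) := by
      rw [sub_mul, one_mul, coeff_sub, coeff_X_mul]
    rw [sum_range_succ]
    have h2 : ‖g.coeff (j+1)‖ ≤ ‖g.coeff j‖ + ‖((X-1)*g).coeff (j+1)‖ := by
      rw [hc]
      simpa using norm_sub_le (g.coeff j) (g.coeff j - g.coeff (j+1))
    calc ‖g.coeff (j+1)‖ ≤ _ := h2
    _ ≤ _ := by gcongr

lemma aux_hockey (k j : ℕ) : ∑ i ∈ range (j+1), ((i + k).choose k : ℝ) = ((j + k + 1).choose (k+1) : ℝ) := by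
  induction j with
  | zero => simp
  | succ j ih =>
    rw [sum_range_succ, ih]
    rw [show j+1+k = j+k+1 from by omega]
    norm_cast
    rw [Nat.choose_succ_succ (j+k+1) k]
    rw [Nat.succ_eq_add_one]; omega

lemma aux_div_coeff : ∀ (k : ℕ) (g : Polynomial ℂ),
    (∀ j, ‖((X - 1)^k * g).coeff j‖ ≤ 1) →
    ∀ j, ‖g.coeff j‖ ≤ ((j + k).choose k : ℝ) := by
  intro k
  induction k with
  | zero => intro g h j; simpa using h j
  | succ k ih =>
    intro g h j
    have h' : ∀ i, ‖((X - 1) * g).coeff i‖ ≤ ((i + k).choose k : ℝ) := by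
      apply ih
      intro i
      have he : (X - 1 : Polynomial ℂ)^k * ((X - 1) * g) = (X - 1)^(k+1) * g := by
        rw [← mul_assoc, ← pow_succ]
      rw [he]
      exact h i
    refine le_trans (aux_coeff_sum_s3 g j) ?_
    refine le_trans (sum_le_sum (fun i _ => h' i)) ?_
    rw [show j + (k+1) = j + k + 1 from by omega]
    exact (aux_hockey k j).le

lemma aux_final (n k : ℕ) (hn : 0 < n) (hkn : k ≤ n) :
    ((k:ℝ)/(9*n))^k * ((n+1).choose (k+1) : ℝ) ≤ (n+1) * (Real.exp 1 / 9)^k := by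
  have hnr : (0:ℝ) < n := by positivity
  have hC : ((n+1).choose (k+1) : ℝ) ≤ (n+1) * (n:ℝ)^k / k.factorial := by
    rw [le_div_iff₀ (by positivity)]
    calc ((n+1).choose (k+1):ℝ) * k.factorial
        ≤ ((n+1).choose (k+1):ℝ) * (k+1).factorial := by
          gcongr
          exact_mod_cast Nat.le_succ k
    _ = ((n+1).descFactorial (k+1) : ℝ) := by
          rw [Nat.descFactorial_eq_factorial_mul_choose]; push_cast; ring
    _ = (n+1) * (n.descFactorial k : ℝ) := by rw [Nat.succ_descFactorial_succ]; push_cast; ring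
    _ ≤ (n+1) * (n:ℝ)^k := by
          gcongr
          exact_mod_cast Nat.descFactorial_le_pow n k
  have h2 : (k:ℝ)^k/(9^k * k.factorial) ≤ Real.exp 1^k/9^k := by
    rw [div_le_div_iff₀ (by positivity) (by positivity)]
    calc (k:ℝ)^k * 9^k ≤ (Real.exp 1^k * k.factorial) * 9^k := by
          gcongr ?_ * _
          exact aux_pow_self k
    _ = Real.exp 1^k * (9^k * k.factorial) := by ring
  calc ((k:ℝ)/(9*n))^k * ((n+1).choose (k+1) : ℝ)
      ≤ ((k:ℝ)/(9*n))^k * ((n+1) * (n:ℝ)^k / k.factorial) := by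
        gcongr
  _ = (n+1) * ((k:ℝ)^k / (9^k * k.factorial)) := by
        rw [div_pow, mul_pow]
        field_simp
  _ ≤ (n+1) * (Real.exp 1^k / 9^k) := by gcongr
  _ = (n+1) * (Real.exp 1 / 9)^k := by rw [div_pow]

set_option maxHeartbeats 1000000 in
theorem stmt3 (n k : ℕ) (hn : 0 < n) (f : Polynomial ℂ) (hdeg : f.natDegree ≤ n)
    (hcoeff : ∀ j, ‖f.coeff j‖ ≤ 1) (hdvd : (Polynomial.X - 1) ^ k ∣ f) :
    ∀ x : ℝ, 1 - (k : ℝ) / (9 * n) ≤ x → x ≤ 1 →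
      ‖f.eval (x : ℂ)‖ ≤ (n + 1) * (Real.exp 1 / 9) ^ k := by
  intro x hx1 hx2
  by_cases hf0 : f = 0
  · subst hf0
    simp only [eval_zero, norm_zero]
    positivity
  have hnr : (0:ℝ) < n := by positivity
  have hX1 : (X - 1 : Polynomial ℂ) = X - C 1 := by rw [map_one]
  have hXne : (X - 1 : Polynomial ℂ) ≠ 0 := by rw [hX1]; exact X_sub_C_ne_zero 1
  have hXk : ((X - 1 : Polynomial ℂ))^k ≠ 0 := pow_ne_zero _ hXne
  have hd : ((X - 1 : Polynomial ℂ)^k).natDegree = k := by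
    rw [natDegree_pow, hX1, natDegree_X_sub_C, mul_one]
  have hkn : k ≤ n := by
    have h := Polynomial.natDegree_le_of_dvd hdvd hf0
    omega
  obtain ⟨g, hg⟩ := hdvd
  have hgne : g ≠ 0 := by rintro rfl; rw [mul_zero] at hg; exact hf0 hg
  have hgd : g.natDegree ≤ n - k := by
    have h : f.natDegree = k + g.natDegree := by
      rw [hg, natDegree_mul hXk hgne, hd]
    omega
  have hcg : ∀ j, ‖g.coeff j‖ ≤ ((j + k).choose k : ℝ) := by
    apply aux_div_coeff k g
    intro j
    rw [← hg]
    exact hcoeff j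
  have hkr : (k:ℝ) ≤ n := by exact_mod_cast hkn
  have hk9 : (k:ℝ)/(9*n) ≤ 1/9 := by
    rw [div_le_div_iff₀ (by positivity) (by norm_num)]
    nlinarith
  have hx0 : (0:ℝ) ≤ x := by linarith
  have hx3 : 1 - x ≤ (k:ℝ)/(9*n) := by linarith
  have hxabs : ‖(x:ℂ)‖ ≤ 1 := by
    rw [Complex.norm_real, Real.norm_eq_abs, abs_of_nonneg hx0]; exact hx2
  -- bound on |g(x)|
  have hgev : ‖g.eval (x:ℂ)‖ ≤ ((n+1).choose (k+1) : ℝ) := by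
    have hlt : g.natDegree < n - k + 1 := by omega
    rw [Polynomial.eval_eq_sum_range' hlt]
    calc ‖∑ i ∈ range (n-k+1), g.coeff i * (x:ℂ)^i‖
        ≤ ∑ i ∈ range (n-k+1), ‖g.coeff i * (x:ℂ)^i‖ :=
          norm_sum_le _ _
    _ ≤ ∑ i ∈ range (n-k+1), ((i+k).choose k : ℝ) := by
        apply sum_le_sum
        intro i _
        rw [norm_mul, norm_pow]
        calc ‖g.coeff i‖ * ‖(x:ℂ)‖ ^ i
            ≤ ((i+k).choose k : ℝ) * 1 := by
              apply mul_le_mul (hcg i) (pow_le_one₀ (norm_nonneg _) hxabs)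
                (by positivity) (by positivity)
        _ = ((i+k).choose k : ℝ) := mul_one _
    _ = ((n-k+k+1).choose (k+1) : ℝ) := aux_hockey k (n-k)
    _ = ((n+1).choose (k+1) : ℝ) := by rw [show n-k+k = n from by omega]
  have habs1 : ‖(x:ℂ) - 1‖ = 1 - x := by
    have he : ((x:ℂ) - 1) = ((x - 1 : ℝ) : ℂ) := by push_cast; ring
    rw [he, Complex.norm_real, Real.norm_eq_abs, abs_of_nonpos (by linarith)]
    ring
  have hfe : ‖f.eval (x:ℂ)‖ = (1-x)^k * ‖g.eval (x:ℂ)‖ := by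
    rw [hg, eval_mul, eval_pow, norm_mul, norm_pow, eval_sub, eval_X, eval_one, habs1]
  rw [hfe]
  calc (1-x)^k * ‖g.eval (x:ℂ)‖
      ≤ ((k:ℝ)/(9*n))^k * ((n+1).choose (k+1) : ℝ) := by
        apply mul_le_mul (pow_le_pow_left₀ (by linarith) hx3 k) hgev
          (norm_nonneg _) (by positivity)
  _ ≤ (n+1) * (Real.exp 1 / 9)^k := aux_final n k hn hkn
end

section
/- If a and b are integers with a ≠ b, |a| ≤ N, and |b| ≤ N, then there exists a prime p ≤ C·log N (for an absolute constant C, and N sufficiently large) such that a ≢ b (mod p). -/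
open Nat Finset

-- adapted from centralBinom_le_of_no_bertrand_prime in Mathlib
lemma my_centralBinom_le_primorial (n : ℕ) (hn : 0 < n) :
    Nat.centralBinom n ≤ (2 * n) ^ Nat.sqrt (2 * n) * primorial (2 * n) := by
  have n2_pos : 1 ≤ 2 * n := by omega
  set S := (Finset.range (2 * n + 1)).filter Nat.Prime with hS
  set f : ℕ → ℕ := fun x => x ^ n.centralBinom.factorization x with hf
  have key : ∏ x ∈ S, f x = ∏ x ∈ Finset.range (2 * n + 1), f x := by
    refine Finset.prod_filter_of_ne fun p _ h => ?_
    contrapose! h; dsimp only [f]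
    rw [Nat.factorization_eq_zero_of_not_prime n.centralBinom h, _root_.pow_zero]
  have : Nat.centralBinom n = ∏ x ∈ S, f x := by
    rw [key, hf]; exact (n.prod_pow_factorization_centralBinom).symm
  rw [this, ← Finset.prod_filter_mul_prod_filter_not S (· ≤ Nat.sqrt (2 * n))]
  apply Nat.mul_le_mul
  · refine (Finset.prod_le_prod' fun p _ => (?_ : f p ≤ 2 * n)).trans ?_
    · exact Nat.pow_factorization_choose_le (by omega)
    have : (Finset.Icc 1 (Nat.sqrt (2 * n))).card = Nat.sqrt (2 * n) := by
      rw [Nat.card_Icc, Nat.add_sub_cancel]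
    rw [Finset.prod_const]
    refine pow_right_mono₀ n2_pos ((Finset.card_le_card fun x hx => ?_).trans this.le)
    obtain ⟨h1, h2⟩ := Finset.mem_filter.1 hx
    exact Finset.mem_Icc.mpr ⟨(Finset.mem_filter.1 h1).2.one_lt.le, h2⟩
  · refine (Finset.prod_le_prod' fun p hp => (?_ : f p ≤ p)).trans ?_
    · obtain ⟨h1, h2⟩ := Finset.mem_filter.1 hp
      refine (pow_right_mono₀ (Finset.mem_filter.1 h1).2.one_lt.le ?_).trans (pow_one p).le
      exact Nat.factorization_choose_le_one (Nat.sqrt_lt'.mp <| not_le.1 h2)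
    rw [primorial]
    exact Finset.prod_le_prod_of_subset_of_one_le' (Finset.filter_subset _ _)
      fun p hp _ => (Finset.mem_filter.1 hp).2.one_lt.le

lemma my_primorial_lb {n : ℕ} (hn : 512 ≤ n) : 4 ^ (2 * n / 3) < primorial (2 * n) := by
  have H1 : n * ((2 * n) ^ Nat.sqrt (2 * n) * 4 ^ (2 * n / 3)) ≤ 4 ^ n := by
    have := bertrand_main_inequality hn
    rwa [mul_assoc] at this
  have H2 : 4 ^ n < n * n.centralBinom :=
    Nat.four_pow_lt_mul_centralBinom n (by omega)
  have H3 := my_centralBinom_le_primorial n (by omega)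
  have H4 : n * ((2 * n) ^ Nat.sqrt (2 * n) * 4 ^ (2 * n / 3)) <
      n * ((2 * n) ^ Nat.sqrt (2 * n) * primorial (2 * n)) :=
    lt_of_le_of_lt H1 (H2.trans_le (Nat.mul_le_mul_left n H3))
  have hpos : 0 < n * (2 * n) ^ Nat.sqrt (2 * n) := by positivity
  rw [← mul_assoc, ← mul_assoc] at H4
  exact lt_of_mul_lt_mul_left H4 (Nat.zero_le _)

theorem stmt7 : ∃ C : ℝ, 0 < C ∧ ∃ N₀ : ℕ, 2 ≤ N₀ ∧ ∀ N : ℕ, N₀ ≤ N → ∀ a b : ℤ,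
    a ≠ b → |a| ≤ N → |b| ≤ N →
    ∃ p : ℕ, Nat.Prime p ∧ (p : ℝ) ≤ C * Real.log N ∧ ¬ (a ≡ b [ZMOD p]) := by
  refine ⟨2000, by norm_num, 2, le_refl 2, ?_⟩
  intro N hN a b hab ha hb
  set L := Nat.log 2 N with hL
  set k := 2 * (512 + L) with hk
  -- the prime bound
  have hlog2 : (0.6931471803 : ℝ) < Real.log 2 := Real.log_two_gt_d9
  have hlogN : Real.log 2 ≤ Real.log N := by
    apply Real.log_le_log (by norm_num)
    exact_mod_cast hN
  have hLreal : (L : ℝ) * Real.log 2 ≤ Real.log N := by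
    calc (L : ℝ) * Real.log 2 = Real.log ((2 : ℝ) ^ L) := by rw [Real.log_pow]
    _ ≤ Real.log N := by
        apply Real.log_le_log (by positivity)
        exact_mod_cast Nat.pow_log_le_self 2 (by omega)
  have hkC : (k : ℝ) ≤ 2000 * Real.log N := by
    have hL3 : (L : ℝ) ≤ 3 * Real.log N / 2 := by nlinarith
    have : (k : ℝ) = 1024 + 2 * L := by rw [hk]; push_cast; ring
    nlinarith
  by_contra hcon
  push_neg at hcon
  -- every prime p ≤ k divides (b - a).natAbs
  set d := (b - a).natAbs with hd
  have hd0 : d ≠ 0 := Int.natAbs_ne_zero.mpr (sub_ne_zero.mpr (Ne.symm hab))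
  have hdvd : primorial k ∣ d := by
    rw [primorial]
    apply Finset.prod_primes_dvd
    · intro p hp; exact (Finset.mem_filter.1 hp).2.prime
    · intro p hp
      obtain ⟨hp1, hp2⟩ := Finset.mem_filter.1 hp
      have hpk : p ≤ k := by have := Finset.mem_range.1 hp1; omega
      have hpC : (p : ℝ) ≤ 2000 * Real.log N := le_trans (by exact_mod_cast hpk) hkC
      have := hcon p hp2 hpC
      have hdvd' : (p : ℤ) ∣ b - a := this.dvd
      rw [hd]
      have := Int.natAbs_dvd_natAbs.2 hdvd'
      simpa using this
  have hle : primorial k ≤ d := Nat.le_of_dvd (Nat.pos_of_ne_zero hd0) hdvd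
  -- but d ≤ 2N < primorial k
  have hd2N : d ≤ 2 * N := by
    have : |b - a| ≤ 2 * (N : ℤ) := by
      calc |b - a| ≤ |b| + |a| := abs_sub _ _
      _ ≤ (N : ℤ) + N := add_le_add hb ha
      _ = 2 * N := by ring
    have h' : (d : ℤ) ≤ 2 * N := by rw [hd, ← Int.abs_eq_natAbs]; exact this
    exact_mod_cast h'
  have hbig : 2 * N < primorial k := by
    have h1 : 4 ^ (2 * (512 + L) / 3) < primorial k := my_primorial_lb (by omega)
    have h2 : 2 * N < 2 ^ (L + 2) := by
      have := Nat.lt_pow_succ_log_self (b := 2) (by norm_num) N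
      rw [← hL] at this
      calc 2 * N < 2 * 2 ^ (L + 1) := by omega
      _ = 2 ^ (L + 2) := by ring
    have h3 : 2 ^ (L + 2) ≤ 4 ^ (2 * (512 + L) / 3) := by
      have h4 : (4 : ℕ) ^ (2 * (512 + L) / 3) = 2 ^ (2 * (2 * (512 + L) / 3)) := by
        rw [pow_mul]; norm_num
      rw [h4]
      exact Nat.pow_le_pow_right (by norm_num) (by omega)
    omega
  omega
end

section
/- For all sufficiently large n, there exist distinct subsets A, B of {1,...,n}, each n^{1/3}-separated, such that |A_{i,p}| = |B_{i,p}| for every prime p ≤ c·n^{1/3}·(log n)^{1/2} and every residue i ∈ {0,...,p−1}, where c > 0 is an absolute constant. -/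
set_option maxHeartbeats 16000000

open Finset

noncomputable section Stmt15Aux

private def dd (n : ℕ) : ℕ := ⌈(n:ℝ) ^ ((1:ℝ)/3)⌉₊
private def mm (n : ℕ) : ℕ := n / (2 * dd n)
private def KK (n : ℕ) : ℕ := ⌊1/100 * (n:ℝ) ^ ((1:ℝ)/3) * Real.sqrt (Real.log n)⌋₊
private def Ps (n : ℕ) : Finset ℕ := (Finset.range (KK n + 1)).filter Nat.Prime
private def SS (n : ℕ) : ℕ := ∑ p ∈ Ps n, p
private def Aset (n : ℕ) (g : Fin (mm n) → Fin (dd n)) : Finset ℕ :=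
  Finset.image (fun i : Fin (mm n) => 2 * dd n * (i:ℕ) + (g i : ℕ) + 1) Finset.univ

private lemma key {d i j gi gj : ℕ} (hgi : gi < d) (hgj : gj < d)
    (h : 2*d*i + gi = 2*d*j + gj) : i = j ∧ gi = gj := by
  rcases lt_trichotomy i j with hij | hij | hij
  · exfalso
    have e1 : 2*d*(i+1) ≤ 2*d*j := Nat.mul_le_mul_left _ hij
    have e2 : 2*d*(i+1) = 2*d*i + 2*d := by ring
    linarith
  · subst hij
    exact ⟨rfl, by omega⟩
  · exfalso
    have e1 : 2*d*(j+1) ≤ 2*d*i := Nat.mul_le_mul_left _ hij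
    have e2 : 2*d*(j+1) = 2*d*j + 2*d := by ring
    linarith

private lemma sepkey {d i j gi gj : ℕ} (hgi : gi < d) (hij : i < j) :
    2*d*i + gi + 1 + d ≤ 2*d*j + gj + 1 := by
  have e1 : 2*d*(i+1) ≤ 2*d*j := Nat.mul_le_mul_left _ hij
  have e2 : 2*d*(i+1) = 2*d*i + 2*d := by ring
  linarith

end Stmt15Aux

theorem stmt15 : ∃ c : ℝ, 0 < c ∧ ∃ N : ℕ, ∀ n : ℕ, N ≤ n → ∃ A B : Finset ℕ,
    A ⊆ Finset.Icc 1 n ∧ B ⊆ Finset.Icc 1 n ∧ A ≠ B ∧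
    (∀ a ∈ A, ∀ a' ∈ A, a ≠ a' → (n : ℝ) ^ ((1 : ℝ) / 3) ≤ |(a : ℝ) - (a' : ℝ)|) ∧
    (∀ b ∈ B, ∀ b' ∈ B, b ≠ b' → (n : ℝ) ^ ((1 : ℝ) / 3) ≤ |(b : ℝ) - (b' : ℝ)|) ∧
    ∀ p : ℕ, Nat.Prime p → (p : ℝ) ≤ c * (n : ℝ) ^ ((1 : ℝ) / 3) * Real.sqrt (Real.log n) →
      ∀ i < p, (A.filter (fun a => a % p = i)).card = (B.filter (fun a => a % p = i)).card := by
  classical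
  refine ⟨1/100, by norm_num, ⌈Real.exp 40000⌉₊ + 1, fun n hn => ?_⟩
  -- basic real setup
  have hn1 : 1 ≤ n := le_trans (Nat.le_add_left 1 _) hn
  have hn0 : (0:ℝ) < n := by exact_mod_cast hn1
  have hnR : Real.exp 40000 ≤ (n:ℝ) := by
    calc Real.exp 40000 ≤ (⌈Real.exp 40000⌉₊ : ℝ) := Nat.le_ceil _
      _ ≤ (n:ℝ) := by exact_mod_cast le_trans (Nat.le_succ _) hn
  set L : ℝ := Real.log n with hLdef
  have hL : 40000 ≤ L := by
    rw [hLdef, ← Real.log_exp 40000]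
    exact Real.log_le_log (Real.exp_pos _) hnR
  set x : ℝ := (n:ℝ) ^ ((1:ℝ)/3) with hxdef
  have hx_pos : 0 < x := Real.rpow_pos_of_pos hn0 _
  have hx_cube : x ^ 3 = n := by
    rw [hxdef, ← Real.rpow_natCast (((n:ℝ)) ^ ((1:ℝ)/3)) 3, ← Real.rpow_mul hn0.le]
    norm_num
  have hx_exp : x = Real.exp (L/3) := by
    rw [hxdef, hLdef, Real.rpow_def_of_pos hn0]
    congr 1; ring
  have hLx : L ≤ x := by
    have h6 : 1 + L/6 ≤ Real.exp (L/6) := by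
      have := Real.add_one_le_exp (L/6); linarith
    have he : Real.exp (L/6) * Real.exp (L/6) = Real.exp (L/3) := by
      rw [← Real.exp_add]; congr 1; ring
    nlinarith [hx_exp, Real.exp_pos (L/6)]
  have hx40000 : 40000 ≤ x := le_trans hL hLx
  -- sqrt L facts
  have hsL_nonneg : 0 ≤ Real.sqrt L := Real.sqrt_nonneg _
  have hsL_sq : Real.sqrt L ^ 2 = L := Real.sq_sqrt (by linarith)
  have hsL200 : 200 ≤ Real.sqrt L := by nlinarith
  have hsLx : Real.sqrt L ≤ x := by nlinarith
  -- d bounds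
  have hd_lb : x ≤ dd n := Nat.le_ceil _
  have hd_ub : (dd n : ℝ) ≤ x + 1 := (Nat.ceil_lt_add_one hx_pos.le).le
  have hd2 : 2 ≤ dd n := by
    have : (2:ℝ) ≤ (dd n : ℝ) := by linarith
    exact_mod_cast this
  have hd0 : 0 < dd n := by omega
  -- m bounds
  have h1 : 2 * dd n * mm n + n % (2 * dd n) = n := Nat.div_add_mod n (2 * dd n)
  have h2dm : 2 * dd n * mm n ≤ n := Nat.le.intro h1
  have h2dm' : n < 2 * dd n * (mm n + 1) := by
    have h2 : n % (2 * dd n) < 2 * dd n := Nat.mod_lt _ (by omega)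
    calc n = 2 * dd n * mm n + n % (2 * dd n) := h1.symm
      _ < 2 * dd n * mm n + 2 * dd n := Nat.add_lt_add_left h2 _
      _ = 2 * dd n * (mm n + 1) := by ring
  have h2dmR : 2*(dd n:ℝ)*(mm n) ≤ n := by exact_mod_cast h2dm
  have h2dmR' : (n:ℝ) < 2*(dd n)*((mm n)+1) := by exact_mod_cast h2dm'
  have hm_lb : x^2/5 ≤ (mm n : ℝ) := by nlinarith
  have hm_ub : (mm n : ℝ) ≤ x^2/2 := by nlinarith
  have hm1 : 1 ≤ mm n := by
    rcases Nat.eq_zero_or_pos (mm n) with h | h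
    · exfalso; rw [h] at hm_lb; push_cast at hm_lb; nlinarith
    · exact h
  -- K bounds
  have hK_ub : (KK n : ℝ) ≤ 1/100 * x * Real.sqrt L := by
    simp only [KK, ← hxdef, ← hLdef]
    exact Nat.floor_le (by positivity)
  have hK_lb : 1/100 * x * Real.sqrt L - 1 ≤ (KK n : ℝ) := by
    simp only [KK, ← hxdef, ← hLdef]
    have := Nat.lt_floor_add_one (1/100 * x * Real.sqrt L)
    linarith
  have hKx : x ≤ (KK n : ℝ) := by
    have h200 : x*200 ≤ x*Real.sqrt L := mul_le_mul_of_nonneg_left hsL200 hx_pos.le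
    linarith
  -- prime facts
  have hPsK : ∀ p ∈ Ps n, p ≤ KK n ∧ p.Prime := by
    intro p hp
    simp only [Ps, mem_filter, mem_range] at hp
    exact ⟨by omega, hp.2⟩
  set s0 := Nat.sqrt (KK n) with hs0
  have hsplit : SS n = ∑ p ∈ (Ps n).filter (fun p => p ≤ s0), p
      + ∑ p ∈ (Ps n).filter (fun p => ¬ p ≤ s0), p :=
    (Finset.sum_filter_add_sum_filter_not _ _ _).symm
  have hsmall : ∑ p ∈ (Ps n).filter (fun p => p ≤ s0), p ≤ (s0+1) * s0 := by
    calc ∑ p ∈ (Ps n).filter (fun p => p ≤ s0), p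
        ≤ ((Ps n).filter (fun p => p ≤ s0)).card • s0 :=
          Finset.sum_le_card_nsmul _ _ _ (fun p hp => (mem_filter.mp hp).2)
      _ ≤ (s0+1) * s0 := by
          rw [smul_eq_mul]
          apply Nat.mul_le_mul_right
          calc ((Ps n).filter (fun p => p ≤ s0)).card ≤ (Finset.range (s0+1)).card := by
                apply Finset.card_le_card
                intro p hp
                simp only [mem_filter] at hp
                exact mem_range.mpr (by omega)
            _ = s0+1 := Finset.card_range _
  set lc := ((Ps n).filter (fun p => ¬ p ≤ s0)).card with hlc
  have hpow : (s0+1)^lc ≤ 4^(KK n) := by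
    calc (s0+1)^lc ≤ ∏ p ∈ (Ps n).filter (fun p => ¬ p ≤ s0), p :=
        Finset.pow_card_le_prod _ _ _ (fun p hp => by
          have := (mem_filter.mp hp).2; omega)
      _ ≤ ∏ p ∈ Ps n, p := Finset.prod_le_prod_of_subset_of_one_le' (filter_subset _ _)
          (fun p hp _ => (hPsK p hp).2.one_lt.le)
      _ = primorial (KK n) := rfl
      _ ≤ 4^(KK n) := primorial_le_4_pow _
  have hx2 : Real.exp (L/6) * Real.exp (L/6) = x := by
    rw [hx_exp, ← Real.exp_add]; congr 1; ring
  have hs1 : Real.exp (L/6) ≤ ((s0:ℝ)+1) := by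
    have hKlt : (KK n : ℝ) < ((s0:ℝ)+1)^2 := by
      have h := Nat.lt_succ_sqrt (KK n)
      rw [← hs0] at h
      have h' : (KK n : ℝ) < ((s0+1 : ℕ):ℝ) * ((s0+1:ℕ):ℝ) := by exact_mod_cast h
      push_cast at h'
      nlinarith
    nlinarith [Real.exp_pos (L/6), sq_nonneg (Real.exp (L/6) - ((s0:ℝ)+1)), hKx]
  have hlogs0 : L/6 ≤ Real.log ((s0:ℝ)+1) := by
    have := Real.log_le_log (Real.exp_pos _) hs1
    rwa [Real.log_exp] at this
  have hlog4 : Real.log 4 ≤ 1.4 := by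
    rw [show (4:ℝ) = 2^2 by norm_num, Real.log_pow]
    push_cast
    nlinarith [Real.log_two_lt_d9]
  have hlog : (lc:ℝ) * Real.log ((s0:ℝ)+1) ≤ (KK n : ℝ) * Real.log 4 := by
    have h4 : ((s0+1)^lc : ℝ) ≤ (4:ℝ)^(KK n) := by exact_mod_cast hpow
    have := Real.log_le_log (by positivity) h4
    rw [Real.log_pow, Real.log_pow] at this
    push_cast at this ⊢
    convert this using 2 <;> push_cast <;> ring
  have hlarge_count : (lc : ℝ) ≤ 9 * (KK n) / L := by
    rw [le_div_iff₀ (by linarith : (0:ℝ) < L)]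
    have t1 : (lc:ℝ) * (L/6) ≤ (lc:ℝ) * Real.log ((s0:ℝ)+1) :=
      mul_le_mul_of_nonneg_left hlogs0 (Nat.cast_nonneg _)
    have t2 : (KK n:ℝ) * Real.log 4 ≤ (KK n:ℝ) * 1.4 :=
      mul_le_mul_of_nonneg_left hlog4 (Nat.cast_nonneg _)
    have t3 : (0:ℝ) ≤ (KK n : ℝ) := Nat.cast_nonneg _
    linarith
  have hlargesum : ∑ p ∈ (Ps n).filter (fun p => ¬ p ≤ s0), p ≤ lc * KK n := by
    calc ∑ p ∈ (Ps n).filter (fun p => ¬ p ≤ s0), p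
        ≤ ((Ps n).filter (fun p => ¬ p ≤ s0)).card • KK n :=
          Finset.sum_le_card_nsmul _ _ _
            (fun p hp => (hPsK p (mem_filter.mp hp).1).1)
      _ = lc * KK n := by rw [smul_eq_mul]
  have hs0sq : s0 * s0 ≤ KK n := by
    have h2 := Nat.sqrt_le' (KK n)
    rw [hs0]
    simpa [pow_two] using h2
  have hs0K : s0 ≤ KK n := by rw [hs0]; exact Nat.sqrt_le_self _
  have hSnat : SS n ≤ 2 * KK n + lc * KK n := by
    have c1 : (s0+1)*s0 ≤ 2 * KK n := by
      calc (s0+1)*s0 = s0*s0 + s0 := by ring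
        _ ≤ KK n + KK n := Nat.add_le_add hs0sq hs0K
        _ = 2 * KK n := by ring
    omega
  have hSS : (SS n : ℝ) ≤ 2 * KK n + 9 * (KK n:ℝ)^2 / L := by
    have c2 : ((lc * KK n : ℕ) : ℝ) ≤ 9*(KK n:ℝ)^2/L := by
      push_cast
      have := mul_le_mul_of_nonneg_right hlarge_count (Nat.cast_nonneg (KK n) : (0:ℝ) ≤ KK n)
      calc (lc:ℝ) * KK n ≤ 9 * (KK n) / L * KK n := this
        _ = 9*(KK n:ℝ)^2/L := by ring
    have c0 : ((SS n : ℕ):ℝ) ≤ ((2 * KK n + lc * KK n : ℕ):ℝ) := by exact_mod_cast hSnat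
    push_cast at c0
    push_cast at c2
    linarith
  -- main count inequalities
  have hK2 : (KK n:ℝ)^2 ≤ x^2 * L / 10000 := by
    have h := mul_self_le_mul_self (Nat.cast_nonneg (KK n) : (0:ℝ) ≤ (KK n:ℝ)) hK_ub
    nlinarith [hsL_sq]
  have hdivb : 9*(KK n:ℝ)^2/L ≤ 9*x^2/10000 := by
    rw [div_le_div_iff₀ (by linarith : (0:ℝ) < L) (by norm_num : (0:ℝ) < 10000)]
    nlinarith
  have hKxx : (KK n : ℝ) ≤ x*x/100 := by
    have := mul_le_mul_of_nonneg_left hsLx hx_pos.le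
    linarith
  have hx2pos : (0:ℝ) < x^2 := by positivity
  have hG1 : 3 * SS n < mm n := by
    have hr : ((3 * SS n : ℕ) : ℝ) < (mm n : ℝ) := by
      push_cast
      linarith [hSS, hdivb, hKxx, hm_lb, hx2pos]
    exact_mod_cast hr
  have hG2 : mm n + 1 ≤ (dd n)^3 := by
    have hr : ((mm n + 1 : ℕ):ℝ) ≤ (((dd n)^3 : ℕ):ℝ) := by
      push_cast
      have h1 : x^2*40000 ≤ x^2*x := mul_le_mul_of_nonneg_left hx40000 hx2pos.le
      have h2 : (1:ℝ) ≤ x^2 := by nlinarith [hx40000]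
      have h3 : x^3 ≤ (dd n:ℝ)^3 := pow_le_pow_left₀ hx_pos.le hd_lb 3
      have h4 : x^2*x = x^3 := by ring
      linarith [hm_ub]
    exact_mod_cast hr
  -- basic properties of Aset
  have hAcard : ∀ g : Fin (mm n) → Fin (dd n), (Aset n g).card = mm n := by
    intro g
    rw [Aset, Finset.card_image_of_injective _ ?_, card_univ, Fintype.card_fin]
    intro i j hij
    have hk := key (g i).isLt (g j).isLt (Nat.add_right_cancel hij)
    exact Fin.val_injective hk.1
  have hAsub : ∀ g : Fin (mm n) → Fin (dd n), Aset n g ⊆ Finset.Icc 1 n := by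
    intro g a ha
    rw [Aset, Finset.mem_image] at ha
    obtain ⟨i, -, rfl⟩ := ha
    rw [Finset.mem_Icc]
    refine ⟨by omega, ?_⟩
    have hi : (i:ℕ) + 1 ≤ mm n := i.isLt
    have hgi : (g i : ℕ) + 1 ≤ dd n := (g i).isLt
    have hmul : 2*dd n*((i:ℕ)+1) ≤ 2*dd n*(mm n) := Nat.mul_le_mul_left _ hi
    have e2 : 2*dd n*((i:ℕ)+1) = 2*dd n*(i:ℕ) + 2*dd n := by ring
    linarith [h2dm]
  have hAsep : ∀ g : Fin (mm n) → Fin (dd n), ∀ a ∈ Aset n g, ∀ a' ∈ Aset n g,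
      a ≠ a' → x ≤ |(a:ℝ) - (a':ℝ)| := by
    intro g a ha a' ha' hne
    rw [Aset, Finset.mem_image] at ha ha'
    obtain ⟨i, -, rfl⟩ := ha
    obtain ⟨j, -, rfl⟩ := ha'
    have hij : (i:ℕ) ≠ (j:ℕ) := fun h => hne (by rw [show i = j from Fin.val_injective h])
    have main : ∀ i j : Fin (mm n), (i:ℕ) < (j:ℕ) →
        x ≤ ((2*dd n*(j:ℕ) + (g j : ℕ) + 1 : ℕ):ℝ) - ((2*dd n*(i:ℕ) + (g i : ℕ) + 1 : ℕ):ℝ) := by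
      intro i j hlt
      have h := sepkey (d := dd n) (gj := (g j : ℕ)) (g i).isLt hlt
      have hle : ((2*dd n*(i:ℕ) + (g i:ℕ) + 1 : ℕ):ℝ) + dd n
          ≤ ((2*dd n*(j:ℕ) + (g j:ℕ) + 1 : ℕ):ℝ) := by exact_mod_cast h
      linarith [hd_lb]
    rcases lt_or_gt_of_ne hij with h | h
    · rw [abs_sub_comm, abs_of_nonneg (by linarith [main i j h, hx_pos])]
      exact main i j h
    · rw [abs_of_nonneg (by linarith [main j i h, hx_pos])]
      exact main j i h
  have hAinj : ∀ g g' : Fin (mm n) → Fin (dd n), Aset n g = Aset n g' → g = g' := by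
    intro g g' h
    funext i
    have hmem : (2*dd n*(i:ℕ) + (g i:ℕ) + 1) ∈ Aset n g' := by
      rw [← h, Aset, Finset.mem_image]; exact ⟨i, mem_univ _, rfl⟩
    rw [Aset, Finset.mem_image] at hmem
    obtain ⟨j, -, hj⟩ := hmem
    obtain ⟨h1, h2⟩ := key (g' j).isLt (g i).isLt (Nat.add_right_cancel hj)
    have hji : j = i := Fin.val_injective h1
    subst hji
    exact (Fin.val_injective h2).symm
  -- pigeonhole
  set Tgt : Finset (∀ p ∈ Ps n, ∀ i ∈ Finset.range p, ℕ) :=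
    (Ps n).pi (fun p => (Finset.range p).pi (fun _ => Finset.range (mm n + 1))) with hTgt
  set G : (Fin (mm n) → Fin (dd n)) → (∀ p ∈ Ps n, ∀ i ∈ Finset.range p, ℕ) :=
    fun g => fun p _ i _ => ((Aset n g).filter (fun a => a % p = i)).card with hG
  have hmaps : ∀ g ∈ (Finset.univ : Finset (Fin (mm n) → Fin (dd n))), G g ∈ Tgt := by
    intro g _
    rw [hTgt, Finset.mem_pi]
    intro p hp
    rw [Finset.mem_pi]
    intro i hi
    rw [Finset.mem_range]
    have hfl : ((Aset n g).filter (fun a => a % p = i)).card ≤ (Aset n g).card :=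
      Finset.card_filter_le _ _
    rw [hAcard g] at hfl
    simp only [hG]
    omega
  have hcard : Tgt.card < (Finset.univ : Finset (Fin (mm n) → Fin (dd n))).card := by
    rw [Finset.card_univ]
    have hT : Tgt.card = (mm n + 1) ^ SS n := by
      rw [hTgt, Finset.card_pi]
      have hinner : ∀ p ∈ Ps n,
          ((Finset.range p).pi (fun _ => Finset.range (mm n + 1))).card = (mm n + 1)^p := by
        intro p _
        rw [Finset.card_pi]
        simp
      rw [Finset.prod_congr rfl hinner, Finset.prod_pow_eq_pow_sum, SS]
    have hF : Fintype.card (Fin (mm n) → Fin (dd n)) = dd n ^ mm n := by simp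
    rw [hT, hF]
    calc (mm n + 1)^(SS n) ≤ ((dd n)^3)^(SS n) := Nat.pow_le_pow_left hG2 _
      _ = dd n ^ (3 * SS n) := by rw [← pow_mul]
      _ < dd n ^ mm n := Nat.pow_lt_pow_right (by omega) hG1
  obtain ⟨g, -, g', -, hgg, hGeq⟩ := Finset.exists_ne_map_eq_of_card_lt_of_maps_to hcard hmaps
  refine ⟨Aset n g, Aset n g', hAsub g, hAsub g', ?_, hAsep g, hAsep g', ?_⟩
  · intro h; exact hgg (hAinj _ _ h)
  · intro p hp hple i hip
    have hpK : p ≤ KK n := by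
      rw [hxdef] at hple
      rw [hLdef] at hple
      exact Nat.le_floor hple
    have hpmem : p ∈ Ps n := by
      rw [Ps, Finset.mem_filter, Finset.mem_range]
      exact ⟨by omega, hp⟩
    have := congrFun (congrFun (congrFun (congrFun hGeq p) hpmem) i) (Finset.mem_range.mpr hip)
    simpa [hG] using this
end

section
/- Let m, n, l, q be positive integers with l ≤ m and q prime, let i ∈ {0,...,m−1}, a ∈ {0,...,q−1}, and let w ∈ {0,1}^l. Then there exists a deterministic finite automaton with at most 2·m·q states that accepts a string x ∈ {0,1}^n if and only if the number of positions j with j ≡ i (mod m) at which w occurs as a contiguous substring of x starting at position j is congruent to a modulo q. -/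
namespace Stmt18

def S (m i t : ℕ) : ℕ := ((t : ZMod m) - (i : ZMod m)).val

def stp (m q l i : ℕ) (w : List Bool) :
    (ZMod m × ZMod q × Bool) → Bool → (ZMod m × ZMod q × Bool) := fun st ch =>
  if ((st.1 + 1 - (i : ZMod m)).val) + 1 < l then
    (st.1 + 1, st.2.1,
      (decide ((st.1 + 1 - (i : ZMod m)).val = 0) || st.2.2) &&
        decide (ch = w.getD ((st.1 + 1 - (i : ZMod m)).val) false))
  else if ((st.1 + 1 - (i : ZMod m)).val) + 1 = l then
    (st.1 + 1,
      if st.2.2 && decide (ch = w.getD ((st.1 + 1 - (i : ZMod m)).val) false) then st.2.1 + 1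
      else st.2.1, true)
  else (st.1 + 1, st.2.1, true)

def M (m q l i a : ℕ) (w : List Bool) : DFA Bool (ZMod m × ZMod q × Bool) where
  step := stp m q l i w
  start := (0, 0, !decide (((0 : ZMod m) - (i : ZMod m)).val + 1 < l))
  accept := {st | st.2.1 = (a : ZMod q)}

def cnt (m l i : ℕ) (w : List Bool) (y : List Bool) : ℕ :=
  ((Finset.Icc 1 y.length).filter fun j => ((y.drop (j - 1)).take l = w ∧ j % m = i)).card

def Bf (m l i : ℕ) (w : List Bool) (y : List Bool) : Bool :=
  if S m i y.length + 1 < l then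
    decide (S m i y.length < y.length ∧
      y.drop (y.length - S m i y.length - 1) = w.take (S m i y.length + 1))
  else true

section Lemmas

variable {m i l q : ℕ} [NeZero m]

lemma mod_eq_iff_cast (x k : ℕ) (hk : k < m) : x % m = k ↔ (x : ZMod m) = (k : ZMod m) := by
  rw [ZMod.natCast_eq_natCast_iff]
  show x % m = k ↔ x % m = k % m
  rw [Nat.mod_eq_of_lt hk]

lemma S_cast (t : ℕ) : ((S m i t : ℕ) : ZMod m) = (t : ZMod m) - (i : ZMod m) := by
  simp [S, ZMod.natCast_val, ZMod.cast_id]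

lemma S_lt (t : ℕ) : S m i t < m := ZMod.val_lt _

lemma S_eq_iff (t k : ℕ) (hk : k < m) : S m i t = k ↔ (t : ZMod m) - (i : ZMod m) = (k : ZMod m) := by
  constructor
  · rintro rfl; exact (S_cast t).symm
  · intro h; unfold S; rw [h, ZMod.val_cast_of_lt hk]

lemma S_succ_of_ne (t : ℕ) (h : S m i (t + 1) ≠ 0) : S m i (t + 1) = S m i t + 1 := by
  have h0 : ((t + 1 : ℕ) : ZMod m) - (i : ZMod m) = ((t : ZMod m) - (i : ZMod m)) + 1 := by
    push_cast; ring
  by_cases hc : S m i t + 1 < m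
  · rw [S_eq_iff _ _ hc, h0, ← S_cast t]
    push_cast; ring
  · exfalso
    apply h
    have hmlt := S_lt (m := m) (i := i) t
    have hm' : S m i t + 1 = m := by omega
    rw [S_eq_iff _ _ (Nat.pos_of_ne_zero (NeZero.ne m)), h0, ← S_cast t]
    have : ((S m i t + 1 : ℕ) : ZMod m) = 0 := by rw [hm']; exact ZMod.natCast_self m
    push_cast at this ⊢
    rw [this]

lemma mod_cond (hl : 0 < l) (hlm : l ≤ m) (hi : i < m) (t : ℕ) (hlt : l ≤ t + 1) :
    (t + 1 - l + 1) % m = i ↔ S m i (t + 1) = l - 1 := by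
  rw [mod_eq_iff_cast _ i hi, S_eq_iff _ (l - 1) (by omega)]
  have e1 : ((t + 1 - l + 1 : ℕ) : ZMod m) = (t : ZMod m) + 2 - (l : ZMod m) := by
    rw [show t + 1 - l + 1 = t + 2 - l from by omega, Nat.cast_sub (by omega)]
    push_cast
    ring
  have e2 : ((l - 1 : ℕ) : ZMod m) = (l : ZMod m) - 1 := by
    rw [Nat.cast_sub (by omega)]
    push_cast
    ring
  rw [e1, e2]
  constructor <;> intro h <;> push_cast at h ⊢ <;> linear_combination h

lemma snoc_inj {A B : List Bool} {x y : Bool} : A ++ [x] = B ++ [y] ↔ A = B ∧ x = y := by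
  constructor
  · intro h
    have h2 := congrArg List.reverse h
    simp at h2
    exact ⟨h2.2, h2.1⟩
  · rintro ⟨rfl, rfl⟩; rfl

lemma take_succ_getD {w : List Bool} {s : ℕ} (h : s < w.length) :
    w.take (s + 1) = w.take s ++ [w.getD s false] := by
  rw [List.take_succ]
  simp [List.getElem?_eq_getElem h, List.getD]

lemma cnt_append (hl : 0 < l) {w : List Bool} (hw : w.length = l) (y : List Bool) (c : Bool) :
    cnt m l i w (y ++ [c]) = cnt m l i w y +
      (if l ≤ y.length + 1 ∧ (y.length + 1 - l + 1) % m = i ∧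
          (y ++ [c]).drop (y.length + 1 - l) = w then 1 else 0) := by
  classical
  unfold cnt
  have hlen : (y ++ [c]).length = y.length + 1 := by simp
  rw [hlen]
  set t := y.length with ht
  have lenB : ∀ j : ℕ, ((y.drop (j - 1)).take l = w) → j + l ≤ t + 1 := by
    intro j hj
    have h2 := congrArg List.length hj
    rw [List.length_take, List.length_drop, hw] at h2
    omega
  have lenC : ∀ j : ℕ, (((y ++ [c]).drop (j - 1)).take l = w) → j + l ≤ t + 2 := by
    intro j hj
    have h2 := congrArg List.length hj
    rw [List.length_take, List.length_drop, hw, hlen] at h2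
    omega
  have stable : ∀ j : ℕ, 1 ≤ j → j + l ≤ t + 1 →
      (((y ++ [c]).drop (j - 1)).take l) = ((y.drop (j - 1)).take l) := by
    intro j hj1 hj
    rw [List.drop_append_of_le_length (by omega),
      List.take_append_of_le_length (by rw [List.length_drop]; omega)]
  by_cases hcond : l ≤ t + 1 ∧ (t + 1 - l + 1) % m = i ∧ (y ++ [c]).drop (t + 1 - l) = w
  · rw [if_pos hcond]
    obtain ⟨hc1, hc2, hc3⟩ := hcond
    have hset : (Finset.Icc 1 (t + 1)).filter
          (fun j => (((y ++ [c]).drop (j - 1)).take l = w ∧ j % m = i))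
        = insert (t + 2 - l)
            ((Finset.Icc 1 t).filter (fun j => ((y.drop (j - 1)).take l = w ∧ j % m = i))) := by
      ext j
      simp only [Finset.mem_filter, Finset.mem_Icc, Finset.mem_insert]
      constructor
      · rintro ⟨⟨hj1, hj2⟩, hP, hPm⟩
        have hC := lenC j hP
        by_cases hje : j = t + 2 - l
        · exact Or.inl hje
        · have hle : j + l ≤ t + 1 := by omega
          exact Or.inr ⟨⟨hj1, by omega⟩, by rw [← stable j hj1 hle]; exact hP, hPm⟩
      · rintro (rfl | ⟨⟨hj1, hj2⟩, hP, hPm⟩)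
        · refine ⟨⟨by omega, by omega⟩, ?_, ?_⟩
          · rw [show t + 2 - l - 1 = t + 1 - l by omega, hc3]
            exact List.take_of_length_le (by rw [hw])
          · rw [show t + 2 - l = t + 1 - l + 1 by omega]; exact hc2
        · have hle := lenB j hP
          exact ⟨⟨hj1, by omega⟩, by rw [stable j hj1 hle]; exact hP, hPm⟩
    rw [hset, Finset.card_insert_of_notMem]
    · intro hmem
      simp only [Finset.mem_filter, Finset.mem_Icc] at hmem
      have := lenB _ hmem.2.1
      omega
  · rw [if_neg hcond]
    have hset : (Finset.Icc 1 (t + 1)).filter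
          (fun j => (((y ++ [c]).drop (j - 1)).take l = w ∧ j % m = i))
        = (Finset.Icc 1 t).filter (fun j => ((y.drop (j - 1)).take l = w ∧ j % m = i)) := by
      ext j
      simp only [Finset.mem_filter, Finset.mem_Icc]
      constructor
      · rintro ⟨⟨hj1, hj2⟩, hP, hPm⟩
        have hC := lenC j hP
        have hle : j + l ≤ t + 1 := by
          by_contra hgt
          apply hcond
          refine ⟨by omega, ?_, ?_⟩
          · rw [show t + 1 - l + 1 = j by omega]; exact hPm
          · have hdl : ((y ++ [c]).drop (j - 1)).length = l := by
              rw [List.length_drop, hlen]; omega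
            have h3 := hP
            rw [List.take_of_length_le (le_of_eq hdl)] at h3
            rw [show t + 1 - l = j - 1 by omega]
            exact h3
        exact ⟨⟨hj1, by omega⟩, by rw [← stable j hj1 hle]; exact hP, hPm⟩
      · rintro ⟨⟨hj1, hj2⟩, hP, hPm⟩
        have hle := lenB j hP
        exact ⟨⟨hj1, by omega⟩, by rw [stable j hj1 hle]; exact hP, hPm⟩
    rw [hset]
    omega


lemma Bf_nil : Bf m l i w [] = !decide (((0 : ZMod m) - (i : ZMod m)).val + 1 < l) := by
  by_cases h : ((0 : ZMod m) - (i : ZMod m)).val + 1 < l <;>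
    simp [Bf, S, h]

lemma cnt_nil : cnt m l i w [] = 0 := by
  simp [cnt]

lemma eval_spec [NeZero q] {a : ℕ} {w : List Bool} (hl : 0 < l) (hlm : l ≤ m) (hi : i < m)
    (hw : w.length = l) (y : List Bool) :
    (M m q l i a w).eval y =
      ((y.length : ZMod m), ((cnt m l i w y : ℕ) : ZMod q), Bf m l i w y) := by
  induction y using List.reverseRecOn with
  | nil =>
    simp only [DFA.eval_nil, List.length_nil, Nat.cast_zero, cnt_nil, Bf_nil]
    rfl
  | append_singleton y c ih =>
    rw [DFA.eval_append_singleton, ih]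
    have hs : ((y.length : ZMod m) + 1 - (i : ZMod m)).val = S m i (y.length + 1) := by
      simp [S]
    have hlen : (y ++ [c]).length = y.length + 1 := by simp
    have hBf : Bf m l i w (y ++ [c]) =
        if S m i (y.length + 1) + 1 < l then
          decide (S m i (y.length + 1) < y.length + 1 ∧
            (y ++ [c]).drop (y.length + 1 - S m i (y.length + 1) - 1) =
              w.take (S m i (y.length + 1) + 1))
        else true := by
      simp only [Bf, hlen]
    have hcnt := cnt_append (m := m) (i := i) hl hw y c
    simp only [M, stp, hlen, hBf, hcnt]
    simp only [hs]
    rcases lt_trichotomy (S m i (y.length + 1) + 1) l with h1 | h1 | h1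
    · rw [if_pos h1]
      have hncond : ¬(l ≤ y.length + 1 ∧ (y.length + 1 - l + 1) % m = i ∧
          (y ++ [c]).drop (y.length + 1 - l) = w) := by
        rintro ⟨hA, hB, _⟩
        have := (mod_cond hl hlm hi y.length hA).mp hB
        omega
      rw [if_neg hncond, if_pos h1]
      simp only [Prod.mk.injEq]
      refine ⟨by push_cast; ring, by push_cast; ring, ?_⟩
      by_cases h0 : S m i (y.length + 1) = 0
      · rw [h0]
        have hdrop : (y ++ [c]).drop (y.length + 1 - 0 - 1) = [c] := by
          rw [show y.length + 1 - 0 - 1 = y.length from by omega]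
          exact List.drop_left
        have htake : w.take (0 + 1) = [w.getD 0 false] := by
          rw [take_succ_getD (by omega)]
          simp
        rw [hdrop, htake]
        simp
      · have hSs := S_succ_of_ne y.length h0
        have hBy : Bf m l i w y = decide (S m i y.length < y.length ∧
            y.drop (y.length - S m i y.length - 1) = w.take (S m i y.length + 1)) := by
          rw [Bf, if_pos (by omega)]
        rw [hBy, hSs]
        have hdrop : (y ++ [c]).drop (y.length + 1 - (S m i y.length + 1) - 1) =
            y.drop (y.length - S m i y.length - 1) ++ [c] := by
          rw [show y.length + 1 - (S m i y.length + 1) - 1 = y.length - S m i y.length - 1 from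
            by omega]
          exact List.drop_append_of_le_length (by omega)
        have htake : w.take (S m i y.length + 1 + 1) =
            w.take (S m i y.length + 1) ++ [w.getD (S m i y.length + 1) false] :=
          take_succ_getD (by omega)
        rw [hdrop, htake]
        simp [snoc_inj, Bool.decide_and, Bool.and_assoc,
          show (S m i y.length + 1 < y.length + 1 ↔ S m i y.length < y.length) from by omega]
    · have hnlt : ¬(S m i (y.length + 1) + 1 < l) := by omega
      rw [if_neg hnlt, if_pos h1, if_neg hnlt]
      have hS : S m i (y.length + 1) = l - 1 := by omega
      have hiff : (l ≤ y.length + 1 ∧ (y.length + 1 - l + 1) % m = i ∧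
          (y ++ [c]).drop (y.length + 1 - l) = w) ↔
          (Bf m l i w y = true ∧ c = w.getD (S m i (y.length + 1)) false) := by
        rcases (by omega : l = 1 ∨ 2 ≤ l) with hl1 | hl2
        · have hBy : Bf m l i w y = true := by
            rw [Bf, if_neg (by omega)]
          have hS0 : S m i (y.length + 1) = 0 := by omega
          have hw1 : w = [w.getD 0 false] := by
            rcases w with _ | ⟨b, rest⟩
            · simp at hw; omega
            · have hr : rest = [] := by
                have : rest.length = 0 := by simp at hw; omega
                exact List.length_eq_zero_iff.mp this
              subst hr; simp
          constructor
          · rintro ⟨hA, hB, hC⟩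
            rw [show y.length + 1 - l = y.length from by omega, List.drop_left] at hC
            refine ⟨hBy, ?_⟩
            rw [hS0]
            rw [hw1] at hC
            simpa [List.getD] using hC
          · rintro ⟨-, hc⟩
            rw [hS0] at hc
            refine ⟨by omega, (mod_cond hl hlm hi y.length (by omega)).mpr (by omega), ?_⟩
            rw [show y.length + 1 - l = y.length from by omega, List.drop_left]
            rw [hc]
            exact hw1.symm
        · have h0 : S m i (y.length + 1) ≠ 0 := by omega
          have hSt : S m i y.length = l - 2 := by
            have := S_succ_of_ne y.length h0; omega
          have hBy : Bf m l i w y = decide (S m i y.length < y.length ∧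
              y.drop (y.length - S m i y.length - 1) = w.take (S m i y.length + 1)) := by
            rw [Bf, if_pos (by omega)]
          have hwsnoc : w = w.take (l - 1) ++ [w.getD (l - 1) false] := by
            have h4 : w.take l = w := List.take_of_length_le (le_of_eq hw)
            have h5 := take_succ_getD (w := w) (s := l - 1) (by omega)
            rw [show l - 1 + 1 = l from by omega, h4] at h5
            exact h5
          rw [hBy, hSt, hS]
          constructor
          · rintro ⟨hA, hB, hC⟩
            rw [List.drop_append_of_le_length (by omega)] at hC
            conv_rhs at hC => rw [hwsnoc]
            obtain ⟨hC1, hC2⟩ := snoc_inj.mp hC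
            refine ⟨?_, hC2⟩
            rw [decide_eq_true_eq]
            refine ⟨by omega, ?_⟩
            rw [show y.length - (l - 2) - 1 = y.length + 1 - l from by omega,
              show l - 2 + 1 = l - 1 from by omega]
            exact hC1
          · rintro ⟨hBf, hc⟩
            rw [decide_eq_true_eq] at hBf
            obtain ⟨hB1, hB2⟩ := hBf
            refine ⟨by omega, (mod_cond hl hlm hi y.length (by omega)).mpr hS, ?_⟩
            rw [List.drop_append_of_le_length (by omega)]
            conv_rhs => rw [hwsnoc]
            refine snoc_inj.mpr ⟨?_, hc⟩
            rw [show y.length + 1 - l = y.length - (l - 2) - 1 from by omega,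
              show l - 1 = l - 2 + 1 from by omega]
            exact hB2
      simp only [Prod.mk.injEq]
      refine ⟨by push_cast; ring, ?_, trivial⟩
      by_cases hc : Bf m l i w y = true ∧ c = w.getD (S m i (y.length + 1)) false
      · rw [if_pos (by simp [hc.1, hc.2]), if_pos (hiff.mpr hc)]
        push_cast; ring
      · rw [if_neg (by intro hcc; exact hc (by simpa using hcc)),
          if_neg (fun hcc => hc (hiff.mp hcc))]
        push_cast; ring
    · rw [if_neg (by omega), if_neg (by omega)]
      have hncond : ¬(l ≤ y.length + 1 ∧ (y.length + 1 - l + 1) % m = i ∧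
          (y ++ [c]).drop (y.length + 1 - l) = w) := by
        rintro ⟨hA, hB, _⟩
        have := (mod_cond hl hlm hi y.length hA).mp hB
        omega
      rw [if_neg hncond, if_neg (by omega)]
      simp only [Prod.mk.injEq]
      exact ⟨by push_cast; ring, by push_cast; ring, trivial⟩

end Lemmas

end Stmt18

theorem stmt18 (m n l q : ℕ) (hm : 0 < m) (hn : 0 < n) (hl : 0 < l) (hlm : l ≤ m)
    (hq : q.Prime) (i a : ℕ) (hi : i < m) (ha : a < q) (w : List Bool) (hw : w.length = l) :
    ∃ (σ : Type) (_ : Fintype σ) (M : DFA Bool σ), Fintype.card σ ≤ 2 * m * q ∧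
      ∀ x : List Bool, x.length = n →
        (x ∈ M.accepts ↔
          ((Finset.Icc 1 (n - l + 1)).filter
              (fun j => (x.drop (j - 1)).take l = w ∧ j % m = i)).card % q = a) := by
  haveI : NeZero m := ⟨hm.ne'⟩
  haveI : NeZero q := ⟨hq.pos.ne'⟩
  refine ⟨ZMod m × ZMod q × Bool, inferInstance, Stmt18.M m q l i a w, ?_, ?_⟩
  · rw [Fintype.card_prod, Fintype.card_prod, ZMod.card, ZMod.card, Fintype.card_bool]
    exact Nat.le_of_eq (by ring)
  · intro x hx
    have hev := Stmt18.eval_spec (m := m) (q := q) (i := i) (a := a) hl hlm hi hw x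
    have hacc : x ∈ (Stmt18.M m q l i a w).accepts ↔
        ((Stmt18.cnt m l i w x : ℕ) : ZMod q) = (a : ZMod q) := by
      rw [DFA.mem_accepts, hev]
      rfl
    rw [hacc, ← Stmt18.mod_eq_iff_cast _ a ha]
    have hfil : ((Finset.Icc 1 (n - l + 1)).filter
          (fun j => (x.drop (j - 1)).take l = w ∧ j % m = i))
        = ((Finset.Icc 1 x.length).filter
          (fun j => (x.drop (j - 1)).take l = w ∧ j % m = i)) := by
      ext j
      simp only [Finset.mem_filter, Finset.mem_Icc]
      constructor
      · rintro ⟨⟨hj1, hj2⟩, hP, hPm⟩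
        exact ⟨⟨hj1, by omega⟩, hP, hPm⟩
      · rintro ⟨⟨hj1, hj2⟩, hP, hPm⟩
        have h2 := congrArg List.length hP
        rw [List.length_take, List.length_drop, hw] at h2
        refine ⟨⟨hj1, by omega⟩, hP, hPm⟩
    rw [Stmt18.cnt, ← hfil]
end
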